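/- arXiv:2308.09625 — 4 statements merged into one kernel-verified Lean document; each statement's English description precedes it below -/
import Mathlib

section
/- Let G be a d-weighted reachability game, let v be a vertex, let x ∈ ℕ^d be a cost profile with all components finite, and let ≲ be either the componentwise order ≤_C or the lexicographic order ≤_L on (ℕ ∪ {∞})^d. If there exists a strategy σ₁ of Player 1 from v such that Cost(Out(σ₁,σ₂,v)) ≲ x for every strategy σ₂ of Player 2, then there exists a strategy σ₁' of Player 1 from v such that for every strategy σ₂ of Player 2: (i) Cost(Out(σ₁',σ₂,v)) ≲ x and (ii) the play Out(σ₁',σ₂,v) visits the target set F, with LengthF(Out(σ₁',σ₂,v)) ≤ |V|. -/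
open Classical

/-- Cost profiles: `d`-tuples over `ℕ ∪ {∞}`. -/
abbrev CostP (d : ℕ) := Fin d → ℕ∞

/-- The componentwise order `≤_C` on `(ℕ ∪ {∞})^d`. -/
def leC {d : ℕ} (x y : CostP d) : Prop := x ≤ y

/-- The strict lexicographic order `<_L` on `(ℕ ∪ {∞})^d`. -/
def ltL {d : ℕ} (x y : CostP d) : Prop :=
  ∃ i, (∀ j, j < i → x j = y j) ∧ x i < y i

/-- The lexicographic order `≤_L` on `(ℕ ∪ {∞})^d`. -/
def leL {d : ℕ} (x y : CostP d) : Prop := x = y ∨ ltL x y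

/-- Minimal elements of `X` with respect to an order `le`. -/
def minimalSet {α : Type*} (le : α → α → Prop) (X : Set α) : Set α :=
  { x | x ∈ X ∧ ∀ y ∈ X, le y x → y = x }

/-- Upward closure of `X` with respect to an order `le`. -/
def upSet {α : Type*} (le : α → α → Prop) (X : Set α) : Set α :=
  { z | ∃ x ∈ X, le x z }

/-- Translation of a set of cost profiles by (the cast of) a tuple `c ∈ ℕ^d`. -/
def addW {d : ℕ} (X : Set (CostP d)) (c : Fin d → ℕ) : Set (CostP d) :=
  { z | ∃ x ∈ X, z = x + fun i => (c i : ℕ∞) }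

/-- A `d`-weighted reachability game: a finite directed graph whose vertices are
partitioned into Player 1's vertices `V1` and Player 2's vertices (the complement),
an edge relation `E` such that every vertex has a successor, a `d`-dimensional
weight function `w` on edges, and a target set `F`. -/
structure MWGame (V : Type*) (d : ℕ) where
  V1 : Set V
  E : V → V → Prop
  succ_nonempty : ∀ v, ∃ v', E v v'
  w : V → V → Fin d → ℕ
  F : Set V

namespace MWGame

variable {V : Type*} {d : ℕ}

/-- Strategies of Player 1: a choice of successor for every history
(represented as the pair (strict past, current vertex)), valid at Player 1's vertices. -/
def Strat1 (G : MWGame V d) :=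
  { σ : List V → V → V // ∀ h u, u ∈ G.V1 → G.E u (σ h u) }

/-- Strategies of Player 2. -/
def Strat2 (G : MWGame V d) :=
  { σ : List V → V → V // ∀ h u, u ∉ G.V1 → G.E u (σ h u) }

/-- The pair (strict past, current vertex) after `n` steps of the play consistent
with `σ₁` and `σ₂` from `v`. -/
noncomputable def outAux (G : MWGame V d) (σ₁ : G.Strat1) (σ₂ : G.Strat2) (v : V) :
    ℕ → List V × V
  | 0 => ([], v)
  | n + 1 =>
    let q := G.outAux σ₁ σ₂ v n
    (q.1 ++ [q.2], if q.2 ∈ G.V1 then σ₁.1 q.1 q.2 else σ₂.1 q.1 q.2)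

/-- `Out(σ₁,σ₂,v)`: the unique play from `v` consistent with `σ₁` and `σ₂`. -/
noncomputable def out (G : MWGame V d) (σ₁ : G.Strat1) (σ₂ : G.Strat2) (v : V) (n : ℕ) : V :=
  (G.outAux σ₁ σ₂ v n).2

/-- The cost profile of a play: the componentwise sum of weights up to the first
visit of the target set, and `(∞,…,∞)` if the target set is never visited. -/
noncomputable def cost (G : MWGame V d) (ρ : ℕ → V) : CostP d :=
  if h : ∃ ℓ, ρ ℓ ∈ G.F then
    fun i => ∑ n ∈ Finset.range (Nat.find h), (G.w (ρ n) (ρ (n + 1)) i : ℕ∞)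
  else ⊤

/-- `Ensure^k(v)`: cost profiles that Player 1 can ensure from `v` within `k` steps. -/
def EnsureK (G : MWGame V d) (le : CostP d → CostP d → Prop) (k : ℕ) (v : V) :
    Set (CostP d) :=
  { x | ∃ σ₁ : G.Strat1, ∀ σ₂ : G.Strat2,
      le (G.cost (G.out σ₁ σ₂ v)) x ∧
      ∀ h : (∃ ℓ, G.out σ₁ σ₂ v ℓ ∈ G.F), Nat.find h ≤ k }

/-- `Ensure(v)`: cost profiles that Player 1 can ensure from `v`. -/
def Ensure (G : MWGame V d) (le : CostP d → CostP d → Prop) (v : V) : Set (CostP d) :=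
  { x | ∃ σ₁ : G.Strat1, ∀ σ₂ : G.Strat2, le (G.cost (G.out σ₁ σ₂ v)) x }

/-- The sets `Iᵏ(v)` computed by the fixpoint algorithm, relative to the order `le`. -/
noncomputable def Iset (G : MWGame V d) (le : CostP d → CostP d → Prop) :
    ℕ → V → Set (CostP d)
  | 0, v => if v ∈ G.F then {0} else {⊤}
  | k + 1, v =>
    if v ∈ G.F then {0}
    else if v ∈ G.V1 then
      minimalSet le (⋃ v' ∈ { u | G.E v u }, addW (upSet le (G.Iset le k v')) (G.w v v'))
    else
      minimalSet le (⋂ v' ∈ { u | G.E v u }, addW (upSet le (G.Iset le k v')) (G.w v v'))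

end MWGame
section StmtZeroAux

variable {V : Type*} {d : ℕ}

/-! ### Order lemmas -/

lemma leC_to_leL {x y : CostP d} (h : leC x y) : leL x y := by
  rcases eq_or_ne x y with he | hne
  · exact Or.inl he
  refine Or.inr ?_
  have hs : (Finset.univ.filter fun i => x i ≠ y i).Nonempty := by
    rcases Function.ne_iff.mp hne with ⟨i, hi⟩
    exact ⟨i, by simp [hi]⟩
  refine ⟨(Finset.univ.filter fun i => x i ≠ y i).min' hs, ?_, ?_⟩
  · intro j hj
    by_contra hne'
    exact absurd (Finset.min'_le _ _ (by simp [hne'])) (not_le_of_gt hj)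
  · have hmem := Finset.min'_mem _ hs
    simp only [Finset.mem_filter, Finset.mem_univ, true_and] at hmem
    exact lt_of_le_of_ne (h _) hmem

lemma ltL_trans {x y z : CostP d} (h₁ : ltL x y) (h₂ : ltL y z) : ltL x z := by
  obtain ⟨i, hi, hi'⟩ := h₁
  obtain ⟨j, hj, hj'⟩ := h₂
  rcases lt_trichotomy i j with h | h | h
  · exact ⟨i, fun k hk => (hi k hk).trans (hj k (hk.trans h)), hi'.trans_le (le_of_eq (hj i h))⟩
  · subst h; exact ⟨i, fun k hk => (hi k hk).trans (hj k hk), hi'.trans hj'⟩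
  · exact ⟨j, fun k hk => (hi k (hk.trans h)).trans (hj k hk), (hi j h) ▸ hj'⟩

lemma leL_trans {x y z : CostP d} (h₁ : leL x y) (h₂ : leL y z) : leL x z := by
  rcases h₁ with rfl | h₁
  · exact h₂
  rcases h₂ with rfl | h₂
  · exact Or.inr h₁
  · exact Or.inr (ltL_trans h₁ h₂)

namespace MWGame

variable (G : MWGame V d)

/-! ### Basic play lemmas -/

noncomputable def dflt (u : V) : V := Classical.choose (G.succ_nonempty u)

lemma dflt_edge (u : V) : G.E u (G.dflt u) := Classical.choose_spec (G.succ_nonempty u)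

noncomputable def defStrat2 : G.Strat2 := ⟨fun _ w => G.dflt w, fun _ w _ => G.dflt_edge w⟩

/-- The list of the first `n` values of a play. -/
def hist (ρ : ℕ → V) (n : ℕ) : List V := (List.range n).map ρ

lemma hist_succ (ρ : ℕ → V) (n : ℕ) : hist ρ (n + 1) = hist ρ n ++ [ρ n] := by
  simp [hist, List.range_succ]

lemma hist_length (ρ : ℕ → V) (n : ℕ) : (hist ρ n).length = n := by simp [hist]

lemma hist_getD (ρ : ℕ → V) {k n : ℕ} (h : k < n) (d₀ : V) : (hist ρ n).getD k d₀ = ρ k := by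
  rw [List.getD_eq_getElem _ _ (by simpa [hist_length] using h)]
  simp [hist]

lemma hist_take (ρ : ℕ → V) {k n : ℕ} (h : k ≤ n) : (hist ρ n).take k = hist ρ k := by
  simp [hist, ← List.map_take, List.take_range, h]

lemma hist_congr {ρ ρ' : ℕ → V} {n : ℕ} (h : ∀ k < n, ρ k = ρ' k) : hist ρ n = hist ρ' n := by
  unfold hist
  apply List.map_congr_left
  intro a ha
  exact h a (List.mem_range.mp ha)

lemma prefix_getD {l₁ l₂ : List V} (h : l₁ <+: l₂) {k : ℕ} (hk : k < l₁.length) (d₀ : V) :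
    l₂.getD k d₀ = l₁.getD k d₀ := by
  rw [List.getD_eq_getElem _ _ hk, List.getD_eq_getElem _ _ (hk.trans_le h.length_le)]
  exact (h.getElem hk).symm

lemma snoc_getD_length (l : List V) (a d₀ : V) : (l ++ [a]).getD l.length d₀ = a := by
  rw [List.getD_eq_getElem _ _ (by simp)]
  simp

variable (σ₁ : G.Strat1) (v : V)

lemma out_zero (σ₂ : G.Strat2) : G.out σ₁ σ₂ v 0 = v := rfl

lemma outAux_fst (σ₂ : G.Strat2) (n : ℕ) :
    (G.outAux σ₁ σ₂ v n).1 = hist (G.out σ₁ σ₂ v) n := by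
  induction n with
  | zero => simp [outAux, hist]
  | succ n ih =>
    show (G.outAux σ₁ σ₂ v n).1 ++ [(G.outAux σ₁ σ₂ v n).2] = _
    rw [ih, hist_succ]
    rfl

lemma out_succ_mem (σ₂ : G.Strat2) (n : ℕ) (h : G.out σ₁ σ₂ v n ∈ G.V1) :
    G.out σ₁ σ₂ v (n + 1) = σ₁.1 (hist (G.out σ₁ σ₂ v) n) (G.out σ₁ σ₂ v n) := by
  show (if (G.outAux σ₁ σ₂ v n).2 ∈ G.V1 then σ₁.1 (G.outAux σ₁ σ₂ v n).1 (G.outAux σ₁ σ₂ v n).2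
      else σ₂.1 (G.outAux σ₁ σ₂ v n).1 (G.outAux σ₁ σ₂ v n).2) = _
  rw [if_pos (show (G.outAux σ₁ σ₂ v n).2 ∈ G.V1 from h), outAux_fst]
  rfl

lemma out_succ_not (σ₂ : G.Strat2) (n : ℕ) (h : G.out σ₁ σ₂ v n ∉ G.V1) :
    G.out σ₁ σ₂ v (n + 1) = σ₂.1 (hist (G.out σ₁ σ₂ v) n) (G.out σ₁ σ₂ v n) := by
  show (if (G.outAux σ₁ σ₂ v n).2 ∈ G.V1 then σ₁.1 (G.outAux σ₁ σ₂ v n).1 (G.outAux σ₁ σ₂ v n).2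
      else σ₂.1 (G.outAux σ₁ σ₂ v n).1 (G.outAux σ₁ σ₂ v n).2) = _
  rw [if_neg (show ¬(G.outAux σ₁ σ₂ v n).2 ∈ G.V1 from h), outAux_fst]
  rfl

lemma out_edge (σ₂ : G.Strat2) (n : ℕ) : G.E (G.out σ₁ σ₂ v n) (G.out σ₁ σ₂ v (n + 1)) := by
  by_cases h : G.out σ₁ σ₂ v n ∈ G.V1
  · rw [out_succ_mem G σ₁ v σ₂ n h]; exact σ₁.2 _ _ h
  · rw [out_succ_not G σ₁ v σ₂ n h]; exact σ₂.2 _ _ h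

/-! ### Consistent histories -/

/-- `(h, u)` is a history consistent with `σ₁` from `v`. -/
def Con (h : List V) (u : V) : Prop :=
  ∃ σ₂ : G.Strat2, hist (G.out σ₁ σ₂ v) h.length = h ∧ G.out σ₁ σ₂ v h.length = u

lemma con_nil : G.Con σ₁ v [] v := ⟨G.defStrat2, rfl, rfl⟩

lemma out_congr (σ₂ σ₂' : G.Strat2) (n : ℕ)
    (hag : ∀ l w, l.length < n → σ₂.1 l w = σ₂'.1 l w) :
    ∀ k ≤ n, G.out σ₁ σ₂ v k = G.out σ₁ σ₂' v k := by
  have key : ∀ k, k ≤ n → hist (G.out σ₁ σ₂ v) k = hist (G.out σ₁ σ₂' v) k ∧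
      G.out σ₁ σ₂ v k = G.out σ₁ σ₂' v k := by
    intro k
    induction k with
    | zero => exact fun _ => ⟨rfl, rfl⟩
    | succ k ih =>
      intro hk
      obtain ⟨ih1, ih2⟩ := ih (Nat.le_of_succ_le hk)
      constructor
      · rw [hist_succ, hist_succ, ih1, ih2]
      · by_cases h : G.out σ₁ σ₂ v k ∈ G.V1
        · rw [out_succ_mem G σ₁ v σ₂ k h, out_succ_mem G σ₁ v σ₂' k (ih2 ▸ h), ih1, ih2]
        · rw [out_succ_not G σ₁ v σ₂ k h, out_succ_not G σ₁ v σ₂' k (ih2 ▸ h), ih1, ih2,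
            hag _ _ (by rw [hist_length]; omega)]
  exact fun k hk => (key k hk).2

lemma getD_mem' {l : List V} {k : ℕ} (h : k < l.length) (d₀ : V) : l.getD k d₀ ∈ l := by
  rw [List.getD_eq_getElem _ _ h]
  exact List.getElem_mem h

lemma con_step {h : List V} {u u' : V} (hc : G.Con σ₁ v h u) (hE : G.E u u')
    (hV1 : u ∈ G.V1 → u' = σ₁.1 h u) : G.Con σ₁ v (h ++ [u]) u' := by
  classical
  obtain ⟨σ₂, hh, hu⟩ := hc
  let f : List V → V → V := fun l w => if l.length = h.length ∧ G.E w u' then u' else σ₂.1 l w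
  have hf : ∀ l w, w ∉ G.V1 → G.E w (f l w) := by
    intro l w hw
    by_cases hcond : l.length = h.length ∧ G.E w u'
    · simp only [f]; rw [if_pos hcond]; exact hcond.2
    · simp only [f]; rw [if_neg hcond]; exact σ₂.2 l w hw
  let σ₂' : G.Strat2 := ⟨f, hf⟩
  have hag : ∀ l w, l.length < h.length → σ₂.1 l w = σ₂'.1 l w := by
    intro l w hl
    show σ₂.1 l w = f l w
    simp only [f]
    rw [if_neg (by rintro ⟨h1, -⟩; omega)]
  have heq := G.out_congr σ₁ v σ₂ σ₂' h.length hag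
  have hh' : hist (G.out σ₁ σ₂' v) h.length = h := by
    exact (hist_congr (fun k hk => (heq k hk.le).symm)).trans hh
  have hu' : G.out σ₁ σ₂' v h.length = u := by rw [← heq h.length le_rfl]; exact hu
  have hlen : (h ++ [u]).length = h.length + 1 := by simp
  refine ⟨σ₂', ?_, ?_⟩
  · rw [hlen, hist_succ, hh', hu']
  · rw [hlen]
    by_cases hm : G.out σ₁ σ₂' v h.length ∈ G.V1
    · rw [out_succ_mem G σ₁ v σ₂' h.length hm, hh', hu']
      exact (hV1 (by rw [← hu']; exact hm)).symm
    · rw [out_succ_not G σ₁ v σ₂' h.length hm, hh', hu']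
      show f h u = u'
      simp only [f]
      rw [if_pos ⟨trivial, hE⟩]

lemma con_inv {h : List V} {u u' : V} (hc : G.Con σ₁ v (h ++ [u]) u') :
    G.E u u' ∧ (u ∈ G.V1 → u' = σ₁.1 h u) := by
  obtain ⟨σ₂, hh, hu⟩ := hc
  rw [show (h ++ [u]).length = h.length + 1 by simp] at hh hu
  rw [hist_succ] at hh
  obtain ⟨hh1, hh2⟩ := List.append_inj hh (by rw [hist_length])
  have hu2 : G.out σ₁ σ₂ v h.length = u := by simpa using hh2
  have hE := G.out_edge σ₁ v σ₂ h.length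
  rw [hu2, hu] at hE
  refine ⟨hE, fun hm => ?_⟩
  rw [← hu, out_succ_mem G σ₁ v σ₂ _ (by rw [hu2]; exact hm), hh1, hu2]

lemma con_take {h : List V} {u : V} (hc : G.Con σ₁ v h u) {k : ℕ} (hk : k ≤ h.length) :
    G.Con σ₁ v (h.take k) ((h ++ [u]).getD k u) := by
  obtain ⟨σ₂, hh, hu⟩ := hc
  have hlen : (h.take k).length = k := by simp [hk]
  have hlist : h ++ [u] = hist (G.out σ₁ σ₂ v) (h.length + 1) := by
    rw [hist_succ, hh, hu]
  refine ⟨σ₂, ?_, ?_⟩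
  · rw [hlen, ← hh, hist_take _ hk]
  · rw [hlen, hlist, hist_getD _ (by omega)]

lemma con_realize (ρ : ℕ → V) (hc : ∀ n, G.Con σ₁ v (hist ρ n) (ρ n)) :
    ∃ σ₂ : G.Strat2, ∀ n, G.out σ₁ σ₂ v n = ρ n := by
  classical
  have hstep : ∀ n, G.E (ρ n) (ρ (n + 1)) ∧ (ρ n ∈ G.V1 → ρ (n + 1) = σ₁.1 (hist ρ n) (ρ n)) := by
    intro n
    have h1 := hc (n + 1)
    rw [hist_succ] at h1
    exact G.con_inv σ₁ v h1
  have h0 : ρ 0 = v := by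
    obtain ⟨σ₂, -, hu⟩ := hc 0
    rw [← hu]
    simp [hist, out_zero]
  let f : List V → V → V := fun l w =>
    if G.E w (ρ (l.length + 1)) then ρ (l.length + 1) else G.dflt w
  have hf : ∀ l w, w ∉ G.V1 → G.E w (f l w) := by
    intro l w _
    by_cases hE : G.E w (ρ (l.length + 1))
    · simp only [f]; rw [if_pos hE]; exact hE
    · simp only [f]; rw [if_neg hE]; exact G.dflt_edge w
  refine ⟨⟨f, hf⟩, ?_⟩
  have key : ∀ n, G.out σ₁ ⟨f, hf⟩ v n = ρ n ∧
      hist (G.out σ₁ ⟨f, hf⟩ v) n = hist ρ n := by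
    intro n
    induction n with
    | zero => exact ⟨h0.symm, rfl⟩
    | succ n ih =>
      obtain ⟨ih1, ih2⟩ := ih
      have hsnd : G.out σ₁ ⟨f, hf⟩ v (n + 1) = ρ (n + 1) := by
        by_cases hm : G.out σ₁ ⟨f, hf⟩ v n ∈ G.V1
        · rw [out_succ_mem G σ₁ v _ n hm, ih1, ih2]
          exact ((hstep n).2 (by rw [← ih1]; exact hm)).symm
        · rw [out_succ_not G σ₁ v _ n hm, ih1, ih2]
          show f (hist ρ n) (ρ n) = ρ (n + 1)
          simp only [f, hist_length]
          rw [if_pos (hstep n).1]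
      exact ⟨hsnd, by rw [hist_succ, hist_succ, ih1, ih2]⟩
  exact fun n => (key n).1

/-! ### Extensions of histories -/

def Ext (h : List V) (u : V) (h' : List V) : Prop := h' = h ∨ h ++ [u] <+: h'

lemma ext_refl (h : List V) (u : V) : Ext h u h := Or.inl rfl

lemma Ext.isPrefix {h h' : List V} {u : V} (he : Ext h u h') : h <+: h' := by
  rcases he with rfl | he
  · exact List.prefix_refl _
  · exact (List.prefix_append h [u]).trans he

lemma Ext.snoc_prefix {h h' : List V} {u : V} (he : Ext h u h') : h ++ [u] <+: h' ++ [u] := by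
  rcases he with rfl | he
  · exact List.prefix_refl _
  · exact he.trans (List.prefix_append h' [u])

lemma Ext.trans {h h' h'' : List V} {u : V} (h₁ : Ext h u h') (h₂ : Ext h' u h'') :
    Ext h u h'' := by
  rcases h₂ with rfl | h₂
  · exact h₁
  rcases h₁ with rfl | h₁
  · exact Or.inr h₂
  · exact Or.inr (h₁.trans ((List.prefix_append h' [u]).trans h₂))

/-- The past of a history avoids the target set. -/
def FFree (h : List V) : Prop := ∀ a ∈ h, a ∉ G.F

lemma no_chain (hreach : ∀ σ₂ : G.Strat2, ∃ ℓ, G.out σ₁ σ₂ v ℓ ∈ G.F)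
    {u : V} (hu : u ∉ G.F) (c : ℕ → List V)
    (hcon : ∀ n, G.Con σ₁ v (c n) u) (hff : ∀ n, G.FFree (c n))
    (hstep : ∀ n, c n ++ [u] <+: c (n + 1)) : False := by
  have hpre : ∀ m n, m ≤ n → c m <+: c n := by
    intro m n hmn
    induction n, hmn using Nat.le_induction with
    | base => exact List.prefix_refl _
    | succ n hmn ih => exact ih.trans ((List.prefix_append (c n) [u]).trans (hstep n))
  have hlen : ∀ n, n ≤ (c n).length := by
    intro n
    induction n with
    | zero => exact Nat.zero_le _
    | succ n ih =>
      have h1 := (hstep n).length_le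
      simp only [List.length_append, List.length_singleton] at h1
      omega
  set ρ : ℕ → V := fun k => (c k ++ [u]).getD k u with hρ
  have hρval : ∀ k n, k ≤ n → ρ k = (c n ++ [u]).getD k u := by
    intro k n hkn
    rcases eq_or_lt_of_le hkn with rfl | hkn'
    · rfl
    · have h1 : c k ++ [u] <+: c n ++ [u] :=
        ((hstep k).trans (hpre (k + 1) n hkn')).trans (List.prefix_append (c n) [u])
      exact (prefix_getD h1 (by have := hlen k; simp; omega) u).symm
  have hhist : ∀ n, hist ρ n = (c n).take n := by
    intro n
    apply List.ext_getElem
    · simp [hist_length, List.length_take, Nat.min_eq_left (hlen n)]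
    · intro k hk1 hk2
      rw [List.getElem_take]
      have hk : k < n := by simpa [hist_length] using hk1
      have h5 := hlen n
      have h2 : ρ k = (c n ++ [u]).getD k u := hρval k n hk.le
      have h3 : (c n ++ [u]).getD k u = (c n).getD k u :=
        prefix_getD (List.prefix_append (c n) [u]) (by omega) u
      have h4 : (hist ρ n)[k] = ρ k := by simp [hist]
      rw [h4, h2, h3, List.getD_eq_getElem _ _ (by omega)]
  have hconk : ∀ n, G.Con σ₁ v (hist ρ n) (ρ n) := by
    intro n
    rw [hhist n, hρval n n le_rfl]
    exact G.con_take σ₁ v (hcon n) (hlen n)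
  obtain ⟨σ₂, hσ₂⟩ := G.con_realize σ₁ v ρ hconk
  obtain ⟨ℓ, hℓ⟩ := hreach σ₂
  rw [hσ₂ ℓ] at hℓ
  have hmem : ρ ℓ ∈ c ℓ ++ [u] := by
    rw [hρ]
    exact getD_mem' (by have := hlen ℓ; simp; omega) u
  rcases List.mem_append.mp hmem with hm | hm
  · exact hff ℓ _ hm hℓ
  · simp only [List.mem_singleton] at hm
    exact hu (hm ▸ hℓ)

/-! ### The fast-forward construction -/

def ffP (h : List V) (u : V) : Prop :=
  ∃ h', (Ext h u h' ∧ G.Con σ₁ v h' u ∧ G.FFree h') ∧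
    ∀ h'', Ext h' u h'' → G.Con σ₁ v h'' u → G.FFree h'' → h'' = h'

noncomputable def ff (h : List V) (u : V) : List V := by
  classical
  exact if hp : G.ffP σ₁ v h u then Classical.choose hp else h

lemma exists_ffP (hreach : ∀ σ₂ : G.Strat2, ∃ ℓ, G.out σ₁ σ₂ v ℓ ∈ G.F)
    {h : List V} {u : V} (hcon : G.Con σ₁ v h u) (hff : G.FFree h) (hu : u ∉ G.F) :
    G.ffP σ₁ v h u := by
  by_contra hn
  rw [ffP] at hn
  push_neg at hn
  have step : ∀ p : List V, Ext h u p → G.Con σ₁ v p u → G.FFree p →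
      ∃ q, (Ext h u q ∧ G.Con σ₁ v q u ∧ G.FFree q) ∧ p ++ [u] <+: q := by
    intro p he hc hf
    obtain ⟨q, hq1, hq2, hq3, hq4⟩ := hn p ⟨he, hc, hf⟩
    refine ⟨q, ⟨he.trans hq1, hq2, hq3⟩, ?_⟩
    rcases hq1 with rfl | hq1
    · exact absurd rfl hq4
    · exact hq1
  choose next hnext using fun (t : {p : List V // Ext h u p ∧ G.Con σ₁ v p u ∧ G.FFree p}) =>
    step t.1 t.2.1 t.2.2.1 t.2.2.2
  let c : ℕ → {p : List V // Ext h u p ∧ G.Con σ₁ v p u ∧ G.FFree p} := fun n =>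
    Nat.rec ⟨h, ext_refl h u, hcon, hff⟩ (fun _ t => ⟨next t, (hnext t).1⟩) n
  exact G.no_chain σ₁ v hreach hu (fun n => (c n).1) (fun n => (c n).2.2.1)
    (fun n => (c n).2.2.2) (fun n => (hnext (c n)).2)

lemma ff_spec (hreach : ∀ σ₂ : G.Strat2, ∃ ℓ, G.out σ₁ σ₂ v ℓ ∈ G.F)
    {h : List V} {u : V} (hcon : G.Con σ₁ v h u) (hff : G.FFree h) :
    G.Con σ₁ v (G.ff σ₁ v h u) u ∧ G.FFree (G.ff σ₁ v h u) ∧ Ext h u (G.ff σ₁ v h u) ∧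
      (u ∉ G.F → ∀ h'', Ext (G.ff σ₁ v h u) u h'' → G.Con σ₁ v h'' u → G.FFree h'' →
        h'' = G.ff σ₁ v h u) := by
  unfold ff
  split_ifs with hp
  · obtain ⟨⟨he, hc, hf⟩, hmax⟩ := Classical.choose_spec hp
    exact ⟨hc, hf, he, fun _ => hmax⟩
  · exact ⟨hcon, hff, ext_refl h u, fun hu => absurd (G.exists_ffP σ₁ v hreach hcon hff hu) hp⟩

noncomputable def phiRev : List V → V → List V
  | [], u => G.ff σ₁ v [] u
  | a :: t, u => G.ff σ₁ v (phiRev t a ++ [a]) u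

noncomputable def Phi (h : List V) (u : V) : List V := G.phiRev σ₁ v h.reverse u

lemma Phi_nil (u : V) : G.Phi σ₁ v [] u = G.ff σ₁ v [] u := rfl

lemma Phi_snoc (h : List V) (a u : V) :
    G.Phi σ₁ v (h ++ [a]) u = G.ff σ₁ v (G.Phi σ₁ v h a ++ [a]) u := by
  show G.phiRev σ₁ v (h ++ [a]).reverse u = _
  rw [show (h ++ [a]).reverse = a :: h.reverse from by simp]
  rfl

/-- Player 1's improved strategy: play `σ₁` on the fast-forwarded virtual history. -/
noncomputable def shorten : G.Strat1 :=
  ⟨fun h u => σ₁.1 (G.Phi σ₁ v h u) u, fun h u hu => σ₁.2 _ u hu⟩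
/-! ### The shortened play and its virtual histories -/

/-- The play consistent with the improved strategy and `σ₂`. -/
noncomputable def sOut (σ₂ : G.Strat2) : ℕ → V := G.out (G.shorten σ₁ v) σ₂ v

/-- The virtual history at time `n` of the shortened play. -/
noncomputable def Hseq (σ₂ : G.Strat2) (n : ℕ) : List V :=
  G.Phi σ₁ v (hist (G.sOut σ₁ v σ₂) n) (G.sOut σ₁ v σ₂ n)

lemma main_inv (hreach : ∀ σ₂ : G.Strat2, ∃ ℓ, G.out σ₁ σ₂ v ℓ ∈ G.F) (σ₂ : G.Strat2) (n : ℕ)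
    (hFF : ∀ k < n, G.sOut σ₁ v σ₂ k ∉ G.F) :
    G.Con σ₁ v (G.Hseq σ₁ v σ₂ n) (G.sOut σ₁ v σ₂ n) ∧
    G.FFree (G.Hseq σ₁ v σ₂ n) ∧
    (∀ m, n = m + 1 →
      Ext (G.Hseq σ₁ v σ₂ m ++ [G.sOut σ₁ v σ₂ m]) (G.sOut σ₁ v σ₂ n) (G.Hseq σ₁ v σ₂ n)) ∧
    (G.sOut σ₁ v σ₂ n ∉ G.F → ∀ h'', Ext (G.Hseq σ₁ v σ₂ n) (G.sOut σ₁ v σ₂ n) h'' →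
      G.Con σ₁ v h'' (G.sOut σ₁ v σ₂ n) → G.FFree h'' → h'' = G.Hseq σ₁ v σ₂ n) := by
  induction n with
  | zero =>
    have h1 : hist (G.sOut σ₁ v σ₂) 0 = [] := by simp [hist]
    have h0 : G.sOut σ₁ v σ₂ 0 = v := rfl
    have hH : G.Hseq σ₁ v σ₂ 0 = G.ff σ₁ v [] v := by
      simp only [Hseq, h1, h0, Phi_nil]
    obtain ⟨hc, hf, he, hmax⟩ := G.ff_spec σ₁ v hreach (G.con_nil σ₁ v)
      (fun a ha => absurd ha List.not_mem_nil)
    rw [hH, h0]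
    exact ⟨hc, hf, fun m hm => by omega, fun hu => hmax hu⟩
  | succ n ih =>
    have hFFn : ∀ k < n, G.sOut σ₁ v σ₂ k ∉ G.F :=
      fun k hk => hFF k (hk.trans (Nat.lt_succ_self n))
    obtain ⟨ihc, ihf, -, -⟩ := ih hFFn
    have hnF : G.sOut σ₁ v σ₂ n ∉ G.F := hFF n (Nat.lt_succ_self n)
    have hstep : G.Con σ₁ v (G.Hseq σ₁ v σ₂ n ++ [G.sOut σ₁ v σ₂ n]) (G.sOut σ₁ v σ₂ (n + 1)) := by
      apply G.con_step σ₁ v ihc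
      · by_cases hm : G.sOut σ₁ v σ₂ n ∈ G.V1
        · have heq := G.out_succ_mem (G.shorten σ₁ v) v σ₂ n hm
          show G.E (G.sOut σ₁ v σ₂ n) (G.sOut σ₁ v σ₂ (n + 1))
          simp only [sOut] at *
          rw [heq]
          exact σ₁.2 _ _ hm
        · have heq := G.out_succ_not (G.shorten σ₁ v) v σ₂ n hm
          show G.E (G.sOut σ₁ v σ₂ n) (G.sOut σ₁ v σ₂ (n + 1))
          simp only [sOut] at *
          rw [heq]
          exact σ₂.2 _ _ hm
      · intro hm
        have heq := G.out_succ_mem (G.shorten σ₁ v) v σ₂ n hm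
        show G.sOut σ₁ v σ₂ (n + 1) = _
        simp only [sOut] at *
        rw [heq]
        rfl
    have hff' : G.FFree (G.Hseq σ₁ v σ₂ n ++ [G.sOut σ₁ v σ₂ n]) := by
      intro a ha
      rcases List.mem_append.mp ha with h | h
      · exact ihf a h
      · simp only [List.mem_singleton] at h
        exact h ▸ hnF
    have hH : G.Hseq σ₁ v σ₂ (n + 1) =
        G.ff σ₁ v (G.Hseq σ₁ v σ₂ n ++ [G.sOut σ₁ v σ₂ n]) (G.sOut σ₁ v σ₂ (n + 1)) := by
      simp only [Hseq, hist_succ, Phi_snoc]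
    obtain ⟨hc, hf, he, hmax⟩ := G.ff_spec σ₁ v hreach hstep hff'
    rw [hH]
    refine ⟨hc, hf, fun m hm => ?_, fun hu => hmax hu⟩
    have hmn : m = n := by omega
    subst hmn
    exact he

lemma reach_bound [Fintype V] (hreach : ∀ σ₂ : G.Strat2, ∃ ℓ, G.out σ₁ σ₂ v ℓ ∈ G.F)
    (σ₂ : G.Strat2) (hn : ∀ k ≤ Fintype.card V, G.sOut σ₁ v σ₂ k ∉ G.F) : False := by
  set N := Fintype.card V with hN
  have key := fun (n : ℕ) (hnN : n ≤ N) =>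
    G.main_inv σ₁ v hreach σ₂ n (fun k hk => hn k (by omega))
  have hext : ∀ n < N, Ext (G.Hseq σ₁ v σ₂ n ++ [G.sOut σ₁ v σ₂ n]) (G.sOut σ₁ v σ₂ (n + 1))
      (G.Hseq σ₁ v σ₂ (n + 1)) := fun n hn' => (key (n + 1) (by omega)).2.2.1 n rfl
  have hpre1 : ∀ b, ∀ a < b, b ≤ N →
      G.Hseq σ₁ v σ₂ a ++ [G.sOut σ₁ v σ₂ a] <+: G.Hseq σ₁ v σ₂ b := by
    intro b
    induction b with
    | zero => intro a h _; omega
    | succ b ih =>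
      intro a hab hbN
      rcases Nat.lt_succ_iff_lt_or_eq.mp hab with h | h
      · exact (ih a h (by omega)).trans
          ((List.prefix_append _ _).trans (hext b (by omega)).isPrefix)
      · subst h; exact (hext a (by omega)).isPrefix
  have hdist : ∀ a b, a < b → b ≤ N → G.sOut σ₁ v σ₂ a ≠ G.sOut σ₁ v σ₂ b := by
    intro a b hab hbN heq
    have hkeya := key a (by omega)
    have hkeyb := key b hbN
    have hHb := hkeya.2.2.2 (hn a (by omega)) (G.Hseq σ₁ v σ₂ b)
      (Or.inr (hpre1 b a hab hbN)) (by rw [heq]; exact hkeyb.1) hkeyb.2.1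
    have hlen := (hpre1 b a hab hbN).length_le
    rw [hHb] at hlen
    simp at hlen
  have hinj : Function.Injective (fun i : Fin (N + 1) => G.sOut σ₁ v σ₂ (i : ℕ)) := by
    intro i j hij
    simp only at hij
    rcases lt_trichotomy (i : ℕ) (j : ℕ) with h | h | h
    · exact absurd hij (hdist i j h (Nat.lt_succ_iff.mp j.isLt))
    · exact Fin.ext h
    · exact absurd hij.symm (hdist j i h (Nat.lt_succ_iff.mp i.isLt))
  have hcard := Fintype.card_le_of_injective _ hinj
  simp only [Fintype.card_fin] at hcard
  omega

lemma cost_compare (hreach : ∀ σ₂ : G.Strat2, ∃ ℓ, G.out σ₁ σ₂ v ℓ ∈ G.F)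
    (σ₂ : G.Strat2) (hfind : ∃ ℓ, G.sOut σ₁ v σ₂ ℓ ∈ G.F) :
    ∃ σ₂' : G.Strat2, G.cost (G.sOut σ₁ v σ₂) ≤ G.cost (G.out σ₁ σ₂' v) := by
  set ℓ := Nat.find hfind with hℓdef
  have hρF : G.sOut σ₁ v σ₂ ℓ ∈ G.F := Nat.find_spec hfind
  have hlt : ∀ k < ℓ, G.sOut σ₁ v σ₂ k ∉ G.F := fun k hk => Nat.find_min hfind hk
  have key := fun (n : ℕ) (hnl : n ≤ ℓ) =>
    G.main_inv σ₁ v hreach σ₂ n (fun k hk => hlt k (by omega))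
  have hext : ∀ n < ℓ, Ext (G.Hseq σ₁ v σ₂ n ++ [G.sOut σ₁ v σ₂ n]) (G.sOut σ₁ v σ₂ (n + 1))
      (G.Hseq σ₁ v σ₂ (n + 1)) := fun n hn' => (key (n + 1) hn').2.2.1 n rfl
  have hchain : ∀ a b, a ≤ b → b ≤ ℓ →
      G.Hseq σ₁ v σ₂ a ++ [G.sOut σ₁ v σ₂ a] <+: G.Hseq σ₁ v σ₂ b ++ [G.sOut σ₁ v σ₂ b] := by
    intro a b hab
    induction b, hab using Nat.le_induction with
    | base => intro _; exact List.prefix_refl _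
    | succ b hab ih =>
      intro hbl
      exact (ih (by omega)).trans ((hext b (by omega)).isPrefix.trans (List.prefix_append _ _))
  have hlen : ∀ n < ℓ, (G.Hseq σ₁ v σ₂ n).length < (G.Hseq σ₁ v σ₂ (n + 1)).length := by
    intro n hn'
    rcases hext n hn' with h1 | h1
    · rw [h1]; simp
    · have := h1.length_le
      simp only [List.length_append, List.length_singleton] at this
      omega
  have hstrict : ∀ b a, a < b → b ≤ ℓ → (G.Hseq σ₁ v σ₂ a).length < (G.Hseq σ₁ v σ₂ b).length := by
    intro b
    induction b with
    | zero => intro a h _; omega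
    | succ b ih =>
      intro a hab hbl
      rcases Nat.lt_succ_iff_lt_or_eq.mp hab with h | h
      · exact (ih a h (by omega)).trans (hlen b (by omega))
      · subst h; exact hlen a (by omega)
  -- realize the final virtual history
  obtain ⟨σ₂', hh', hu'⟩ := (key ℓ le_rfl).1
  have hffl := (key ℓ le_rfl).2.1
  refine ⟨σ₂', ?_⟩
  set Lv := (G.Hseq σ₁ v σ₂ ℓ).length with hLv
  have hW : hist (G.out σ₁ σ₂' v) (Lv + 1) = G.Hseq σ₁ v σ₂ ℓ ++ [G.sOut σ₁ v σ₂ ℓ] := by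
    rw [hist_succ, hh', hu']
  have hπk : ∀ k < Lv + 1, G.out σ₁ σ₂' v k =
      (G.Hseq σ₁ v σ₂ ℓ ++ [G.sOut σ₁ v σ₂ ℓ]).getD k (G.sOut σ₁ v σ₂ ℓ) := by
    intro k hk
    rw [← hW]
    exact (hist_getD _ hk _).symm
  have hπnF : ∀ k < Lv, G.out σ₁ σ₂' v k ∉ G.F := by
    intro k hk
    have h1 : G.out σ₁ σ₂' v k = (G.Hseq σ₁ v σ₂ ℓ).getD k (G.sOut σ₁ v σ₂ ℓ) := by
      rw [← hh']
      exact (hist_getD _ hk _).symm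
    rw [h1]
    exact hffl _ (getD_mem' hk _)
  have hfindπ : ∃ t, G.out σ₁ σ₂' v t ∈ G.F := ⟨Lv, by rw [hu']; exact hρF⟩
  have hfindπv : Nat.find hfindπ = Lv :=
    (Nat.find_eq_iff hfindπ).2 ⟨by rw [hu']; exact hρF, fun k hk => hπnF k hk⟩
  have hcostρ : G.cost (G.sOut σ₁ v σ₂) =
      fun i => ∑ n ∈ Finset.range ℓ,
        (G.w (G.sOut σ₁ v σ₂ n) (G.sOut σ₁ v σ₂ (n + 1)) i : ℕ∞) := by
    simp only [MWGame.cost]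
    rw [dif_pos hfind]
  have hcostπ : G.cost (G.out σ₁ σ₂' v) =
      fun i => ∑ t ∈ Finset.range Lv,
        (G.w (G.out σ₁ σ₂' v t) (G.out σ₁ σ₂' v (t + 1)) i : ℕ∞) := by
    simp only [MWGame.cost]
    rw [dif_pos hfindπ, hfindπv]
  -- values of the realized play at the recorded indices
  have hval1 : ∀ n < ℓ, G.out σ₁ σ₂' v ((G.Hseq σ₁ v σ₂ n).length) = G.sOut σ₁ v σ₂ n := by
    intro n hn'
    have hA := hchain n ℓ hn'.le le_rfl
    have hlen1 : (G.Hseq σ₁ v σ₂ n).length < Lv + 1 := by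
      have := hstrict ℓ n hn' le_rfl
      omega
    rw [hπk _ hlen1, prefix_getD hA (by simp) _, snoc_getD_length]
  have hval2 : ∀ n < ℓ, G.out σ₁ σ₂' v ((G.Hseq σ₁ v σ₂ n).length + 1) = G.sOut σ₁ v σ₂ (n + 1) := by
    intro n hn'
    have hB : (G.Hseq σ₁ v σ₂ n ++ [G.sOut σ₁ v σ₂ n]) ++ [G.sOut σ₁ v σ₂ (n + 1)] <+:
        G.Hseq σ₁ v σ₂ ℓ ++ [G.sOut σ₁ v σ₂ ℓ] :=
      ((hext n hn').snoc_prefix).trans (hchain (n + 1) ℓ hn' le_rfl)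
    have hlen2 : (G.Hseq σ₁ v σ₂ n).length + 1 < Lv + 1 := by
      have h1 := hB.length_le
      simp only [List.length_append, List.length_singleton] at h1
      omega
    have h3 : (G.Hseq σ₁ v σ₂ n ++ [G.sOut σ₁ v σ₂ n]).length = (G.Hseq σ₁ v σ₂ n).length + 1 := by
      simp
    rw [hπk _ hlen2, prefix_getD hB (by simp), ← h3, snoc_getD_length]
  -- the sum comparison
  rw [hcostρ, hcostπ]
  intro i
  dsimp only
  have hsum1 : ∑ n ∈ Finset.range ℓ,
      (G.w (G.sOut σ₁ v σ₂ n) (G.sOut σ₁ v σ₂ (n + 1)) i : ℕ∞) =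
      ∑ n ∈ Finset.range ℓ,
      (G.w (G.out σ₁ σ₂' v ((G.Hseq σ₁ v σ₂ n).length))
        (G.out σ₁ σ₂' v ((G.Hseq σ₁ v σ₂ n).length + 1)) i : ℕ∞) := by
    refine Finset.sum_congr rfl (fun n hn' => ?_)
    rw [hval1 n (Finset.mem_range.mp hn'), hval2 n (Finset.mem_range.mp hn')]
  rw [hsum1]
  have hinj : ∀ a ∈ Finset.range ℓ, ∀ b ∈ Finset.range ℓ,
      (G.Hseq σ₁ v σ₂ a).length = (G.Hseq σ₁ v σ₂ b).length → a = b := by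
    intro a ha b hb hab
    rcases lt_trichotomy a b with h | h | h
    · exact absurd hab (hstrict b a h (Finset.mem_range.mp hb).le).ne
    · exact h
    · exact absurd hab.symm (hstrict a b h (Finset.mem_range.mp ha).le).ne
  have hsub : (Finset.range ℓ).image (fun n => (G.Hseq σ₁ v σ₂ n).length) ⊆ Finset.range Lv := by
    intro t ht
    simp only [Finset.mem_image, Finset.mem_range] at ht ⊢
    obtain ⟨n, hn', rfl⟩ := ht
    exact hstrict ℓ n hn' le_rfl
  calc ∑ n ∈ Finset.range ℓ, (G.w (G.out σ₁ σ₂' v (G.Hseq σ₁ v σ₂ n).length)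
        (G.out σ₁ σ₂' v ((G.Hseq σ₁ v σ₂ n).length + 1)) i : ℕ∞)
      = ∑ t ∈ (Finset.range ℓ).image (fun n => (G.Hseq σ₁ v σ₂ n).length),
          (G.w (G.out σ₁ σ₂' v t) (G.out σ₁ σ₂' v (t + 1)) i : ℕ∞) :=
        (Finset.sum_image (f := fun t => (G.w (G.out σ₁ σ₂' v t)
          (G.out σ₁ σ₂' v (t + 1)) i : ℕ∞)) hinj).symm
    _ ≤ ∑ t ∈ Finset.range Lv, (G.w (G.out σ₁ σ₂' v t) (G.out σ₁ σ₂' v (t + 1)) i : ℕ∞) :=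
        Finset.sum_le_sum_of_subset hsub
end MWGame
end StmtZeroAux

/-- If Player 1 has a strategy from `v` ensuring a finite cost
profile `x` (w.r.t. `≤_C` or `≤_L`), then he has one that moreover guarantees that
the target set is reached within `|V|` steps. -/
theorem stmt0 {V : Type*} [Fintype V] {d : ℕ} (hd : 1 ≤ d) (G : MWGame V d)
    (le : CostP d → CostP d → Prop) (hle : le = leC ∨ le = leL)
    (v : V) (x : Fin d → ℕ)
    (hex : ∃ σ₁ : G.Strat1, ∀ σ₂ : G.Strat2,
      le (G.cost (G.out σ₁ σ₂ v)) (fun i => (x i : ℕ∞))) :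
    ∃ σ₁' : G.Strat1, ∀ σ₂ : G.Strat2,
      le (G.cost (G.out σ₁' σ₂ v)) (fun i => (x i : ℕ∞)) ∧
      ∃ h : (∃ ℓ, G.out σ₁' σ₂ v ℓ ∈ G.F), Nat.find h ≤ Fintype.card V := by
  classical
  obtain ⟨σ₁, hσ₁⟩ := hex
  have hreach : ∀ σ₂ : G.Strat2, ∃ ℓ, G.out σ₁ σ₂ v ℓ ∈ G.F := by
    intro σ₂
    by_contra hn
    have hcost : G.cost (G.out σ₁ σ₂ v) = ⊤ := by
      simp only [MWGame.cost]
      rw [dif_neg hn]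
    have h1 := hσ₁ σ₂
    rw [hcost] at h1
    have i0 : Fin d := ⟨0, hd⟩
    rcases hle with rfl | rfl
    · have h2 : (⊤ : CostP d) i0 ≤ ((x i0 : ℕ∞)) := h1 i0
      simp only [Pi.top_apply, top_le_iff] at h2
      exact ENat.coe_ne_top (x i0) h2
    · unfold leL ltL at h1
      rcases h1 with h1 | ⟨i, -, hlt⟩
      · have h2 := congrFun h1 i0
        simp only [Pi.top_apply] at h2
        exact ENat.coe_ne_top (x i0) h2.symm
      · have h3 : (⊤ : CostP d) i = (⊤ : ℕ∞) := rfl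
        rw [h3] at hlt
        exact not_top_lt hlt
  refine ⟨G.shorten σ₁ v, fun σ₂ => ?_⟩
  have hout : G.out (G.shorten σ₁ v) σ₂ v = G.sOut σ₁ v σ₂ := rfl
  rw [hout]
  have hreach2 : ∃ k, k ≤ Fintype.card V ∧ G.sOut σ₁ v σ₂ k ∈ G.F := by
    by_contra hn
    push_neg at hn
    exact G.reach_bound σ₁ v hreach σ₂ hn
  obtain ⟨k0, hk0N, hk0F⟩ := hreach2
  have hfind : ∃ ℓ, G.sOut σ₁ v σ₂ ℓ ∈ G.F := ⟨k0, hk0F⟩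
  obtain ⟨σ₂', hcmp⟩ := G.cost_compare σ₁ v hreach σ₂ hfind
  refine ⟨?_, hfind, (Nat.find_min' hfind hk0F).trans hk0N⟩
  have hπ := hσ₁ σ₂'
  rcases hle with rfl | rfl
  · exact le_trans hcmp hπ
  · exact leL_trans (leC_to_leL hcmp) hπ
end

section
/- Let G be a d-weighted reachability game and let ≲ be either the componentwise order ≤_C or the lexicographic order ≤_L on (ℕ ∪ {∞})^d. For every k ∈ ℕ, every vertex v ∈ V₁ \ F and every x ∈ Iᵏ⁺¹(v), there exist a successor v' of v and x' ∈ Iᵏ(v') such that x = x' + w(v,v'). -/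
open Classical

/-- For `v ∈ V₁ \\ F` and `x ∈ Iᵏ⁺¹(v)` there are a successor `v'`
of `v` and `x' ∈ Iᵏ(v')` with `x = x' + w(v,v')`. -/
theorem stmt7 {V : Type*} [Fintype V] {d : ℕ} (hd : 1 ≤ d) (G : MWGame V d)
    (le : CostP d → CostP d → Prop) (hle : le = leC ∨ le = leL)
    (k : ℕ) (v : V) (hv1 : v ∈ G.V1) (hvF : v ∉ G.F)
    (x : CostP d) (hx : x ∈ G.Iset le (k + 1) v) :
    ∃ v', G.E v v' ∧ ∃ x' ∈ G.Iset le k v',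
      x = x' + fun i => (G.w v v' i : ℕ∞) := by
  have hrefl : ∀ z : CostP d, le z z := by
    rcases hle with h | h <;> subst h
    · intro z; exact le_refl z
    · intro z; exact Or.inl rfl
  have hmono : ∀ (a b : CostP d) (c : Fin d → ℕ), le a b →
      le (a + fun i => (c i : ℕ∞)) (b + fun i => (c i : ℕ∞)) := by
    rcases hle with h | h <;> subst h
    · intro a b c hab
      exact add_le_add hab (le_refl _)
    · rintro a b c (rfl | ⟨i, hj, hi⟩)
      · exact Or.inl rfl
      · refine Or.inr ⟨i, fun j hji => ?_, ?_⟩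
        · show a j + (c j : ℕ∞) = b j + (c j : ℕ∞)
          rw [hj j hji]
        · show a i + (c i : ℕ∞) < b i + (c i : ℕ∞)
          exact WithTop.add_lt_add_right (WithTop.coe_ne_top) hi
  simp only [MWGame.Iset, if_neg hvF, if_pos hv1] at hx
  obtain ⟨hxU, hxmin⟩ := hx
  rw [Set.mem_iUnion₂] at hxU
  obtain ⟨v', hE, y, hy, rfl⟩ := hxU
  obtain ⟨x', hx', hle'⟩ := hy
  refine ⟨v', hE, x', hx', ?_⟩
  have hmem : (x' + fun i => (G.w v v' i : ℕ∞)) ∈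
      ⋃ u ∈ { u | G.E v u }, addW (upSet le (G.Iset le k u)) (G.w v u) := by
    rw [Set.mem_iUnion₂]
    exact ⟨v', hE, x', ⟨x', hx', hrefl x'⟩, rfl⟩
  exact (hxmin _ hmem (hmono _ _ _ hle')).symm
end

section
/- Let G be a d-weighted reachability game and take ≲ to be the componentwise order ≤_C on (ℕ ∪ {∞})^d. For every k ∈ ℕ and every vertex v ∉ F: if v ∈ V₁ then Ensure^{k+1}(v) = ⋃_{v' ∈ succ(v)} (Ensure^k(v') + w(v,v')), and if v ∈ V₂ then Ensure^{k+1}(v) = ⋂_{v' ∈ succ(v)} (Ensure^k(v') + w(v,v')). -/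
open Classical

section StmtAux

variable {V : Type*} {d : ℕ}

/-- A canonical successor of every vertex. -/
noncomputable def MWGame.chS (G : MWGame V d) (u : V) : V := (G.succ_nonempty u).choose

lemma MWGame.chS_spec (G : MWGame V d) (u : V) : G.E u (G.chS u) :=
  (G.succ_nonempty u).choose_spec

lemma MWGame.outAux_succ (G : MWGame V d) (σ₁ : G.Strat1) (σ₂ : G.Strat2) (v : V) (n : ℕ) :
    G.outAux σ₁ σ₂ v (n+1) =
      ((G.outAux σ₁ σ₂ v n).1 ++ [(G.outAux σ₁ σ₂ v n).2],
       if (G.outAux σ₁ σ₂ v n).2 ∈ G.V1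
         then σ₁.1 (G.outAux σ₁ σ₂ v n).1 (G.outAux σ₁ σ₂ v n).2
         else σ₂.1 (G.outAux σ₁ σ₂ v n).1 (G.outAux σ₁ σ₂ v n).2) := rfl

lemma MWGame.outAux_fst_cons (G : MWGame V d) (σ₁ : G.Strat1) (σ₂ : G.Strat2) (v : V) :
    ∀ n, ∃ t, (G.outAux σ₁ σ₂ v (n+1)).1 = v :: t := by
  intro n
  induction n with
  | zero => exact ⟨[], rfl⟩
  | succ m ih =>
    obtain ⟨t, ht⟩ := ih
    refine ⟨t ++ [(G.outAux σ₁ σ₂ v (m+1)).2], ?_⟩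
    rw [G.outAux_succ, ht]
    rfl

/-- The shift lemma: if the first move from `v` leads to `v'` and the strategies
`τ₁, τ₂` simulate `σ₁, σ₂` on histories extended by `v`, then the play from `v`
shifted by one step is the play from `v'`. -/
lemma MWGame.outAux_shift (G : MWGame V d) (σ₁ τ₁ : G.Strat1) (σ₂ τ₂ : G.Strat2) {v v' : V}
    (hfirst : (if v ∈ G.V1 then σ₁.1 [] v else σ₂.1 [] v) = v')
    (h1 : ∀ t u, σ₁.1 (v :: t) u = τ₁.1 t u)
    (h2 : ∀ t u, σ₂.1 (v :: t) u = τ₂.1 t u) :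
    ∀ n, G.outAux σ₁ σ₂ v (n+1) =
      (v :: (G.outAux τ₁ τ₂ v' n).1, (G.outAux τ₁ τ₂ v' n).2) := by
  intro n
  induction n with
  | zero =>
    rw [G.outAux_succ]
    show (([] : List V) ++ [v], _) = _
    simp only [List.nil_append]
    exact Prod.ext rfl hfirst
  | succ m ih =>
    rw [G.outAux_succ, ih, G.outAux_succ]
    simp only [List.cons_append, h1, h2]

lemma MWGame.out_shift (G : MWGame V d) (σ₁ τ₁ : G.Strat1) (σ₂ τ₂ : G.Strat2) {v v' : V}
    (hfirst : (if v ∈ G.V1 then σ₁.1 [] v else σ₂.1 [] v) = v')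
    (h1 : ∀ t u, σ₁.1 (v :: t) u = τ₁.1 t u)
    (h2 : ∀ t u, σ₂.1 (v :: t) u = τ₂.1 t u) :
    ∀ n, G.out σ₁ σ₂ v (n+1) = G.out τ₁ τ₂ v' n := by
  intro n
  show (G.outAux σ₁ σ₂ v (n+1)).2 = _
  rw [G.outAux_shift σ₁ τ₁ σ₂ τ₂ hfirst h1 h2 n]
  rfl

/-- Plays only depend on the values of Player 1's strategy on reachable histories. -/
lemma MWGame.outAux_congr (G : MWGame V d) (σ₁ τ₁ : G.Strat1) (σ₂ : G.Strat2) (v : V)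
    (h0 : σ₁.1 [] v = τ₁.1 [] v)
    (h1 : ∀ t u, σ₁.1 (v :: t) u = τ₁.1 (v :: t) u) :
    ∀ n, G.outAux σ₁ σ₂ v n = G.outAux τ₁ σ₂ v n := by
  intro n
  induction n with
  | zero => rfl
  | succ m ih =>
    rw [G.outAux_succ, G.outAux_succ, ← ih]
    congr 1
    rcases m with _ | m
    · show (if v ∈ G.V1 then σ₁.1 [] v else σ₂.1 [] v) = _
      rw [h0]
      rfl
    · obtain ⟨t, ht⟩ := G.outAux_fst_cons σ₁ σ₂ v m
      rw [ht, h1]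

lemma MWGame.out_congr_s9 (G : MWGame V d) (σ₁ τ₁ : G.Strat1) (σ₂ : G.Strat2) (v : V)
    (h0 : σ₁.1 [] v = τ₁.1 [] v)
    (h1 : ∀ t u, σ₁.1 (v :: t) u = τ₁.1 (v :: t) u) :
    ∀ n, G.out σ₁ σ₂ v n = G.out τ₁ σ₂ v n := by
  intro n
  show (G.outAux σ₁ σ₂ v n).2 = _
  rw [G.outAux_congr σ₁ τ₁ σ₂ v h0 h1 n]
  rfl

/-- Cost decomposition for a shifted play. -/
lemma MWGame.cost_shift (G : MWGame V d) {ρ ρ' : ℕ → V} {v v' : V}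
    (h0 : ρ 0 = v) (h0' : ρ' 0 = v') (hvF : v ∉ G.F)
    (hs : ∀ n, ρ (n+1) = ρ' n) :
    (G.cost ρ = fun i => (G.w v v' i : ℕ∞) + G.cost ρ' i) ∧
    ((∃ ℓ, ρ ℓ ∈ G.F) ↔ (∃ ℓ, ρ' ℓ ∈ G.F)) ∧
    (∀ (h : ∃ ℓ, ρ ℓ ∈ G.F) (h' : ∃ ℓ, ρ' ℓ ∈ G.F), Nat.find h = Nat.find h' + 1) := by
  have hiff : (∃ ℓ, ρ ℓ ∈ G.F) ↔ (∃ ℓ, ρ' ℓ ∈ G.F) := by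
    constructor
    · rintro ⟨ℓ, hℓ⟩
      rcases ℓ with _ | m
      · exact absurd (h0 ▸ hℓ) hvF
      · exact ⟨m, (hs m) ▸ hℓ⟩
    · rintro ⟨m, hm⟩
      exact ⟨m + 1, (hs m).symm ▸ hm⟩
  have hfd : ∀ (h : ∃ ℓ, ρ ℓ ∈ G.F) (h' : ∃ ℓ, ρ' ℓ ∈ G.F),
      Nat.find h = Nat.find h' + 1 := by
    intro h h'
    rw [Nat.find_eq_iff]
    constructor
    · rw [hs]; exact Nat.find_spec h'
    · intro m hm
      rcases m with _ | j
      · rw [h0]; exact hvF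
      · rw [hs]; exact Nat.find_min h' (by omega)
  refine ⟨?_, hiff, hfd⟩
  by_cases hF' : ∃ ℓ, ρ' ℓ ∈ G.F
  · have hF : ∃ ℓ, ρ ℓ ∈ G.F := hiff.mpr hF'
    funext i
    rw [MWGame.cost, MWGame.cost, dif_pos hF, dif_pos hF']
    rw [hfd hF hF', Finset.sum_range_succ']
    have e0 : ρ 0 = v := h0
    have e1 : ρ 1 = v' := by rw [hs 0, h0']
    rw [e0, e1, add_comm]
    congr 1
    apply Finset.sum_congr rfl
    intro n _
    rw [hs n, hs (n+1)]
  · have hF : ¬ ∃ ℓ, ρ ℓ ∈ G.F := fun h => hF' (hiff.mp h)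
    funext i
    rw [MWGame.cost, MWGame.cost, dif_neg hF, dif_neg hF']
    show (⊤ : ℕ∞) = _ + (⊤ : CostP d) i
    rw [Pi.top_apply, add_top]

/-- Transfer of Player 1's guarantee from `v'` up to `v`. -/
lemma MWGame.ensure_transfer_up (G : MWGame V d) {k : ℕ} {v v' : V} (hvF : v ∉ G.F)
    {y : CostP d} {ρ ρ' : ℕ → V} (h0 : ρ 0 = v) (h0' : ρ' 0 = v')
    (hs : ∀ n, ρ (n+1) = ρ' n)
    (hc : leC (G.cost ρ') y) (hk : ∀ h' : ∃ ℓ, ρ' ℓ ∈ G.F, Nat.find h' ≤ k) :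
    leC (G.cost ρ) (y + fun i => (G.w v v' i : ℕ∞)) ∧
      (∀ h : ∃ ℓ, ρ ℓ ∈ G.F, Nat.find h ≤ k + 1) := by
  obtain ⟨hco, hif, hfd⟩ := G.cost_shift h0 h0' hvF hs
  have hc' : G.cost ρ' ≤ y := hc
  constructor
  · intro i
    rw [congrFun hco i]
    calc (G.w v v' i : ℕ∞) + G.cost ρ' i ≤ (G.w v v' i : ℕ∞) + y i :=
          add_le_add_right (hc' i) _
      _ = (y + fun i => (G.w v v' i : ℕ∞)) i := by
          show _ = y i + _
          rw [add_comm]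
  · intro h
    have h' : ∃ ℓ, ρ' ℓ ∈ G.F := hif.mp h
    have := hk h'
    rw [hfd h h']
    omega

/-- Transfer of Player 1's guarantee from `v` down to `v'`. -/
lemma MWGame.ensure_transfer_down (G : MWGame V d) {k : ℕ} {v v' : V} (hvF : v ∉ G.F)
    {x : CostP d} {ρ ρ' : ℕ → V} (h0 : ρ 0 = v) (h0' : ρ' 0 = v')
    (hs : ∀ n, ρ (n+1) = ρ' n)
    (hc : leC (G.cost ρ) x) (hk : ∀ h : ∃ ℓ, ρ ℓ ∈ G.F, Nat.find h ≤ k + 1) :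
    leC (G.cost ρ') (fun i => x i - (G.w v v' i : ℕ∞)) ∧
      (∀ h' : ∃ ℓ, ρ' ℓ ∈ G.F, Nat.find h' ≤ k) := by
  obtain ⟨hco, hif, hfd⟩ := G.cost_shift h0 h0' hvF hs
  have hc' : G.cost ρ ≤ x := hc
  constructor
  · intro i
    have h1 : (G.w v v' i : ℕ∞) + G.cost ρ' i ≤ x i := by
      rw [← congrFun hco i]; exact hc' i
    exact ENat.le_sub_of_add_le_left (ENat.coe_ne_top _) h1
  · intro h'
    have h : ∃ ℓ, ρ ℓ ∈ G.F := hif.mpr h'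
    have := hk h
    rw [hfd h h'] at this
    omega

/-- The ensured profile dominates the weight of the first edge. -/
lemma MWGame.ensure_weight_le (G : MWGame V d) {v v' : V} (hvF : v ∉ G.F)
    {x : CostP d} {ρ ρ' : ℕ → V} (h0 : ρ 0 = v) (h0' : ρ' 0 = v')
    (hs : ∀ n, ρ (n+1) = ρ' n)
    (hc : leC (G.cost ρ) x) : ∀ i, (G.w v v' i : ℕ∞) ≤ x i := by
  obtain ⟨hco, -, -⟩ := G.cost_shift h0 h0' hvF hs
  have hc' : G.cost ρ ≤ x := hc
  intro i
  refine le_trans ?_ (hc' i)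
  rw [congrFun hco i]
  exact le_self_add

/-- Shift of a Player 1 strategy past an initial vertex. -/
def MWGame.shiftS1 (G : MWGame V d) (v : V) (σ : G.Strat1) : G.Strat1 :=
  ⟨fun t u => σ.1 (v :: t) u, fun t u hu => σ.2 (v :: t) u hu⟩

/-- Shift of a Player 2 strategy past an initial vertex. -/
def MWGame.shiftS2 (G : MWGame V d) (v : V) (σ : G.Strat2) : G.Strat2 :=
  ⟨fun t u => σ.1 (v :: t) u, fun t u hu => σ.2 (v :: t) u hu⟩

/-- Prefixing a Player 2 strategy with a first move. -/
def MWGame.consS2 (G : MWGame V d) (f : V → V) (hf : ∀ u, u ∉ G.V1 → G.E u (f u))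
    (σ : G.Strat2) : G.Strat2 :=
  ⟨fun t u => match t with | [] => f u | _ :: t' => σ.1 t' u, by
    intro t u hu
    match t with
    | [] => exact hf u hu
    | _ :: t' => exact σ.2 t' u hu⟩

/-- Prefixing a Player 1 strategy function with a first move. -/
def MWGame.consS1 (G : MWGame V d) (f : V → V) (hf : ∀ u, u ∈ G.V1 → G.E u (f u))
    (σf : List V → V → V) (hσf : ∀ t u, u ∈ G.V1 → G.E u (σf t u)) : G.Strat1 :=
  ⟨fun t u => match t with | [] => f u | _ :: t' => σf t' u, by
    intro t u hu
    match t with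
    | [] => exact hf u hu
    | _ :: t' => exact hσf t' u hu⟩

/-- The trivial Player 2 strategy. -/
noncomputable def MWGame.defS2 (G : MWGame V d) : G.Strat2 :=
  ⟨fun _ u => G.chS u, fun _ u _ => G.chS_spec u⟩

/-- The trivial Player 1 strategy. -/
noncomputable def MWGame.defS1 (G : MWGame V d) : G.Strat1 :=
  ⟨fun _ u => G.chS u, fun _ u _ => G.chS_spec u⟩

end StmtAux

/-- For the componentwise order, for `v ∉ F`: if `v ∈ V₁` then
`Ensure^{k+1}(v) = ⋃_{v' ∈ succ(v)} (Ensure^k(v') + w(v,v'))`, and if `v ∈ V₂` then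
`Ensure^{k+1}(v) = ⋂_{v' ∈ succ(v)} (Ensure^k(v') + w(v,v'))`. -/
theorem stmt9 {V : Type*} [Fintype V] {d : ℕ} (hd : 1 ≤ d) (G : MWGame V d)
    (k : ℕ) (v : V) (hvF : v ∉ G.F) :
    (v ∈ G.V1 →
      G.EnsureK leC (k + 1) v =
        ⋃ v' ∈ { u | G.E v u }, addW (G.EnsureK leC k v') (G.w v v')) ∧
    (v ∉ G.V1 →
      G.EnsureK leC (k + 1) v =
        ⋂ v' ∈ { u | G.E v u }, addW (G.EnsureK leC k v') (G.w v v')) := by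
  constructor
  · -- Player 1's vertex
    intro hvV1
    ext x
    constructor
    · -- ⊆ : from a witness strategy read off the first move
      rintro ⟨σ₁, hσ₁⟩
      have hE : G.E v (σ₁.1 [] v) := σ₁.2 [] v hvV1
      refine Set.mem_iUnion₂.mpr ⟨σ₁.1 [] v, hE, ?_⟩
      set v' := σ₁.1 [] v with hv'
      have hout1 : ∀ σ₂ : G.Strat2, G.out σ₁ σ₂ v 1 =
          (if v ∈ G.V1 then σ₁.1 [] v else σ₂.1 [] v) := fun _ => rfl
      have hw : ∀ i, (G.w v v' i : ℕ∞) ≤ x i := by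
        refine G.ensure_weight_le hvF (ρ' := fun n => G.out σ₁ G.defS2 v (n + 1))
          rfl ?_ (fun n => rfl) (hσ₁ G.defS2).1
        show G.out σ₁ G.defS2 v 1 = v'
        rw [hout1, if_pos hvV1]
      refine ⟨fun i => x i - (G.w v v' i : ℕ∞), ⟨G.shiftS1 v σ₁, ?_⟩, ?_⟩
      · intro σ₂'
        set σ₂ := G.consS2 (fun u => G.chS u) (fun u _ => G.chS_spec u) σ₂' with hσ₂
        have hshift := G.out_shift σ₁ (G.shiftS1 v σ₁) σ₂ σ₂'
          (by rw [if_pos hvV1]) (fun t u => rfl) (fun t u => rfl)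
        obtain ⟨h1, h2⟩ := hσ₁ σ₂
        exact G.ensure_transfer_down hvF rfl rfl hshift h1 h2
      · funext i
        show x i = (x i - (G.w v v' i : ℕ∞)) + (G.w v v' i : ℕ∞)
        exact (tsub_add_cancel_of_le (hw i)).symm
    · -- ⊇ : prepend the first move to a witness strategy from the successor
      intro hx
      obtain ⟨v', hE, y, ⟨σy, hσy⟩, hxy⟩ := Set.mem_iUnion₂.mp hx
      have hEvv' : G.E v v' := hE
      subst hxy
      have hf : ∀ u, u ∈ G.V1 → G.E u (if u = v then v' else G.chS u) := by
        intro u _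
        by_cases h : u = v
        · subst h; rw [if_pos rfl]; exact hEvv'
        · rw [if_neg h]; exact G.chS_spec u
      refine ⟨G.consS1 (fun u => if u = v then v' else G.chS u) hf σy.1 σy.2, ?_⟩
      intro σ₂
      have hshift := G.out_shift (v := v) (v' := v')
        (G.consS1 (fun u => if u = v then v' else G.chS u) hf σy.1 σy.2)
        σy σ₂ (G.shiftS2 v σ₂)
        (by rw [if_pos hvV1]
            show (if v = v then v' else G.chS v) = v'
            rw [if_pos rfl])
        (fun t u => rfl) (fun t u => rfl)
      obtain ⟨h1, h2⟩ := hσy (G.shiftS2 v σ₂)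
      exact G.ensure_transfer_up hvF rfl rfl hshift h1 h2
  · -- Player 2's vertex
    intro hvV2
    ext x
    constructor
    · -- ⊆ : for each successor, force Player 2 to move there first
      rintro ⟨σ₁, hσ₁⟩
      refine Set.mem_iInter₂.mpr ?_
      intro v' hE
      have hEvv' : G.E v v' := hE
      have hf : ∀ u, u ∉ G.V1 → G.E u (if u = v then v' else G.chS u) := by
        intro u _
        by_cases h : u = v
        · subst h; rw [if_pos rfl]; exact hEvv'
        · rw [if_neg h]; exact G.chS_spec u
      have hfirst : ∀ σ₂' : G.Strat2, (if v ∈ G.V1 then σ₁.1 [] v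
          else (G.consS2 (fun u => if u = v then v' else G.chS u) hf σ₂').1 [] v) = v' := by
        intro σ₂'
        rw [if_neg hvV2]
        show (if v = v then v' else G.chS v) = v'
        rw [if_pos rfl]
      have hw : ∀ i, (G.w v v' i : ℕ∞) ≤ x i := by
        refine G.ensure_weight_le hvF
          (ρ' := fun n => G.out σ₁ (G.consS2 (fun u => if u = v then v' else G.chS u) hf G.defS2) v (n + 1))
          rfl ?_ (fun n => rfl)
          (hσ₁ (G.consS2 (fun u => if u = v then v' else G.chS u) hf G.defS2)).1
        show G.out σ₁ _ v 1 = v'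
        have : G.out σ₁ (G.consS2 (fun u => if u = v then v' else G.chS u) hf G.defS2) v 1 =
            (if v ∈ G.V1 then σ₁.1 [] v
              else (G.consS2 (fun u => if u = v then v' else G.chS u) hf G.defS2).1 [] v) := rfl
        rw [this, hfirst]
      refine ⟨fun i => x i - (G.w v v' i : ℕ∞), ⟨G.shiftS1 v σ₁, ?_⟩, ?_⟩
      · intro σ₂'
        set σ₂ := G.consS2 (fun u => if u = v then v' else G.chS u) hf σ₂' with hσ₂
        have hshift := G.out_shift σ₁ (G.shiftS1 v σ₁) σ₂ σ₂'
          (hfirst σ₂') (fun t u => rfl) (fun t u => rfl)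
        obtain ⟨h1, h2⟩ := hσ₁ σ₂
        exact G.ensure_transfer_down hvF rfl rfl hshift h1 h2
      · funext i
        show x i = (x i - (G.w v v' i : ℕ∞)) + (G.w v v' i : ℕ∞)
        exact (tsub_add_cancel_of_le (hw i)).symm
    · -- ⊇ : combine the successor strategies according to Player 2's first move
      intro hx
      have hx' := Set.mem_iInter₂.mp hx
      have hx'' : ∀ v', G.E v v' → ∃ y, y ∈ G.EnsureK leC k v' ∧
          x = y + fun i => ((G.w v v' i : ℕ∞)) := fun v' h => hx' v' h
      choose Y hYmem hYeq using hx''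
      choose S hS using hYmem
      set Stot : V → G.Strat1 := fun u => if h : G.E v u then S u h else G.defS1 with hStot
      set τf : List V → V → V := fun t u => (Stot (t.headD u)).1 t u with hτf
      have hτfv : ∀ t u, u ∈ G.V1 → G.E u (τf t u) := fun t u hu => (Stot (t.headD u)).2 t u hu
      refine ⟨G.consS1 (fun u => G.chS u) (fun u _ => G.chS_spec u) τf hτfv, ?_⟩
      intro σ₂
      have hE : G.E v (σ₂.1 [] v) := σ₂.2 [] v hvV2
      set v' := σ₂.1 [] v with hv'
      set τ₁ : G.Strat1 := ⟨τf, hτfv⟩ with hτ₁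
      have hshift := G.out_shift (v := v) (v' := v')
        (G.consS1 (fun u => G.chS u) (fun u _ => G.chS_spec u) τf hτfv)
        τ₁ σ₂ (G.shiftS2 v σ₂)
        (by rw [if_neg hvV2]) (fun t u => rfl) (fun t u => rfl)
      have hagree := G.out_congr_s9 τ₁ (Stot v') (G.shiftS2 v σ₂) v' rfl (fun t u => rfl)
      have hSt : Stot v' = S v' hE := dif_pos hE
      have hs : ∀ n, G.out (G.consS1 (fun u => G.chS u) (fun u _ => G.chS_spec u) τf hτfv) σ₂ v (n + 1) =
          G.out (S v' hE) (G.shiftS2 v σ₂) v' n := by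
        intro n
        rw [hshift n, hagree n, hSt]
      obtain ⟨h1, h2⟩ := hS v' hE (G.shiftS2 v σ₂)
      rw [hYeq v' hE]
      exact G.ensure_transfer_up hvF rfl rfl hs h1 h2
end

section
/- Let G be a d-weighted reachability game and let ≲ be either the componentwise order ≤_C or the lexicographic order ≤_L on (ℕ ∪ {∞})^d. Let v ∉ F and let x ∈ I^{|V|}(v) with x ≠ (∞,…,∞). If x ∈ Iⁿ(v) for some n ∈ ℕ, then x ∈ I^ℓ(v) for every ℓ ≥ n. -/
open Classical

namespace Stmt14Aux

variable {d : ℕ}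

lemma ltL_of_le_of_ne {x y : CostP d} (hxy : x ≤ y) (hne : x ≠ y) : ltL x y := by
  have hex : ∃ i, x i ≠ y i := by
    by_contra h
    push_neg at h
    exact hne (funext h)
  obtain ⟨i, hi, hmin⟩ := (wellFounded_lt (α := Fin d)).has_min {i | x i ≠ y i} hex
  refine ⟨i, fun j hj => ?_, lt_of_le_of_ne (hxy i) hi⟩
  by_contra hne'
  exact hmin j hne' hj

lemma leL_of_le {x y : CostP d} (hxy : x ≤ y) : leL x y := by
  by_cases h : x = y
  · exact Or.inl h
  · exact Or.inr (ltL_of_le_of_ne hxy h)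

lemma ltL_irrefl (x : CostP d) : ¬ ltL x x := by
  rintro ⟨i, -, hi⟩; exact lt_irrefl _ hi

lemma ltL_trans {x y z : CostP d} (h1 : ltL x y) (h2 : ltL y z) : ltL x z := by
  obtain ⟨i, hi, hxi⟩ := h1
  obtain ⟨j, hj, hyj⟩ := h2
  rcases lt_trichotomy i j with H | rfl | H
  · exact ⟨i, fun k hk => (hi k hk).trans (hj k (hk.trans H)), (hj i H) ▸ hxi⟩
  · exact ⟨i, fun k hk => (hi k hk).trans (hj k hk), hxi.trans hyj⟩
  · exact ⟨j, fun k hk => (hi k (hk.trans H)).trans (hj k hk), (hi j H).symm ▸ hyj⟩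

lemma leL_trans {x y z : CostP d} (h1 : leL x y) (h2 : leL y z) : leL x z := by
  rcases h1 with rfl | h1
  · exact h2
  rcases h2 with rfl | h2
  · exact Or.inr h1
  · exact Or.inr (ltL_trans h1 h2)

lemma leL_antisymm {x y : CostP d} (h1 : leL x y) (h2 : leL y x) : x = y := by
  rcases h1 with rfl | h1
  · rfl
  rcases h2 with rfl | h2
  · rfl
  · exact absurd (ltL_trans h1 h2) (ltL_irrefl x)

/-- Existence of `ltL`-minimal elements in nonempty sets (greedy construction). -/
lemma exists_ltL_min (S : Set (CostP d)) (hS : S.Nonempty) :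
    ∃ x ∈ S, ∀ y ∈ S, ¬ ltL y x := by
  -- greedy refinement of S, coordinate by coordinate
  let A : ℕ → Set (CostP d) := fun k => Nat.rec S
    (fun k Ak => if h : k < d then {x ∈ Ak | ∀ y ∈ Ak, ¬ y ⟨k, h⟩ < x ⟨k, h⟩} else Ak) k
  have hA0 : A 0 = S := rfl
  have hAsucc : ∀ k, A (k + 1) =
      if h : k < d then {x ∈ A k | ∀ y ∈ A k, ¬ y ⟨k, h⟩ < x ⟨k, h⟩} else A k := fun k => rfl
  have hmono : ∀ k, A (k + 1) ⊆ A k := by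
    intro k
    rw [hAsucc k]
    split
    · exact fun x hx => hx.1
    · exact fun x hx => hx
  have hchain : ∀ j k, j ≤ k → A k ⊆ A j := by
    intro j k hjk
    induction k with
    | zero => rw [Nat.le_zero.mp hjk]
    | succ k ih =>
      rcases Nat.lt_or_ge j (k + 1) with h | h
      · exact fun x hx => ih (Nat.lt_succ_iff.mp h) (hmono k hx)
      · rw [Nat.le_antisymm hjk h]
  have hne : ∀ k, (A k).Nonempty := by
    intro k
    induction k with
    | zero => exact hS
    | succ k ih =>
      rw [hAsucc k]
      split
      next h =>
        obtain ⟨m, hm, hmmin⟩ := (wellFounded_lt (α := ℕ∞)).has_min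
          ((fun x => x ⟨k, h⟩) '' A k) (ih.image _)
        obtain ⟨x, hx, hxm⟩ := hm
        refine ⟨x, hx, fun y hy => ?_⟩
        have : x ⟨k, h⟩ = m := hxm
        rw [this]
        exact hmmin _ ⟨y, hy, rfl⟩
      · exact ih
  obtain ⟨x, hx⟩ := hne d
  refine ⟨x, hchain 0 d (Nat.zero_le d) hx, ?_⟩
  rintro y hy ⟨i, hagree, hlt⟩
  -- y belongs to every A j for j ≤ i
  have hyA : ∀ j : ℕ, j ≤ (i : ℕ) → y ∈ A j := by
    intro j hj
    induction j with
    | zero => exact hy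
    | succ j ih =>
      have hji : j < (i : ℕ) := Nat.lt_of_succ_le hj
      have hjd : j < d := hji.trans i.isLt
      rw [hAsucc j]
      rw [dif_pos hjd]
      have hyj : y ∈ A j := ih (Nat.le_of_lt hji)
      have hxj1 : x ∈ A (j + 1) := hchain (j + 1) d (Nat.succ_le_of_lt hjd) hx
      rw [hAsucc j, dif_pos hjd] at hxj1
      have heq : y ⟨j, hjd⟩ = x ⟨j, hjd⟩ := hagree ⟨j, hjd⟩ hji
      exact ⟨hyj, fun z hz => heq ▸ hxj1.2 z hz⟩
  have hyi : y ∈ A i := hyA i le_rfl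
  have hxi : x ∈ A ((i : ℕ) + 1) := hchain _ d (Nat.succ_le_of_lt i.isLt) hx
  rw [hAsucc i, dif_pos i.isLt] at hxi
  have := hxi.2 y hyi
  rw [Fin.eta] at this
  exact this hlt

/-- The properties of the order we need, satisfied by both `leC` and `leL`. -/
structure NiceLe (le : CostP d → CostP d → Prop) : Prop where
  refl : ∀ x, le x x
  trans : ∀ {x y z : CostP d}, le x y → le y z → le x z
  antisymm : ∀ {x y : CostP d}, le x y → le y x → x = y
  of_le : ∀ {x y : CostP d}, x ≤ y → le x y
  exists_min : ∀ (S : Set (CostP d)) (x : CostP d), x ∈ S →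
    ∃ m, m ∈ minimalSet le S ∧ le m x

lemma nice_of (le : CostP d → CostP d → Prop) (hle : le = leC ∨ le = leL) : NiceLe le := by
  have hstrict : ∀ {x y : CostP d}, le x y → x ≠ y → ltL x y := by
    rcases hle with rfl | rfl
    · intro x y h hne; exact ltL_of_le_of_ne h hne
    · intro x y h hne; exact h.resolve_left hne
  have htrans : ∀ {x y z : CostP d}, le x y → le y z → le x z := by
    rcases hle with rfl | rfl
    · intro x y z h1 h2; exact le_trans h1 h2
    · intro x y z h1 h2; exact leL_trans h1 h2
  refine ⟨?_, htrans, ?_, ?_, ?_⟩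
  · rcases hle with rfl | rfl
    · exact fun x => le_refl x
    · exact fun x => Or.inl rfl
  · rcases hle with rfl | rfl
    · exact fun h1 h2 => le_antisymm h1 h2
    · exact fun h1 h2 => leL_antisymm h1 h2
  · rcases hle with rfl | rfl
    · exact fun h => h
    · exact fun h => leL_of_le h
  · intro S x hx
    obtain ⟨m, hm, hmin⟩ := exists_ltL_min {y ∈ S | le y x} ⟨x, hx, by
      rcases hle with rfl | rfl
      · exact le_refl x
      · exact Or.inl rfl⟩
    refine ⟨m, ⟨hm.1, fun y hy hym => ?_⟩, hm.2⟩
    by_contra hne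
    exact hmin y ⟨hy, htrans hym hm.2⟩ (hstrict hym hne)

end Stmt14Aux

namespace Stmt14Aux

open MWGame

section Game

variable {V : Type*} {d : ℕ} (G : MWGame V d) (le : CostP d → CostP d → Prop)

/-- Cast of the weight of an edge to a cost profile. -/
def wc (v v' : V) : CostP d := fun i => (G.w v v' i : ℕ∞)

open Classical in
/-- The set whose minimal elements form `I^{k+1}(v)` (for `v ∉ F`). -/
noncomputable def Tset (k : ℕ) (v : V) : Set (CostP d) :=
  if v ∈ G.V1 then
    ⋃ v' ∈ { u | G.E v u }, addW (upSet le (G.Iset le k v')) (G.w v v')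
  else
    ⋂ v' ∈ { u | G.E v u }, addW (upSet le (G.Iset le k v')) (G.w v v')

lemma Iset_succ {v : V} (hv : v ∉ G.F) (k : ℕ) :
    G.Iset le (k + 1) v = minimalSet le (Tset G le k v) := by
  by_cases h1 : v ∈ G.V1 <;> simp [MWGame.Iset, Tset, hv, h1]

lemma mem_Tset_V1 {v : V} (h1 : v ∈ G.V1) {k : ℕ} {t : CostP d} :
    t ∈ Tset G le k v ↔
      ∃ v', G.E v v' ∧ ∃ z ∈ upSet le (G.Iset le k v'), t = z + wc G v v' := by
  simp only [Tset, if_pos h1, Set.mem_iUnion, Set.mem_setOf_eq]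
  constructor
  · rintro ⟨v', hE, z, hz, rfl⟩
    exact ⟨v', hE, z, hz, rfl⟩
  · rintro ⟨v', hE, z, hz, rfl⟩
    exact ⟨v', hE, z, hz, rfl⟩

lemma mem_Tset_V2 {v : V} (h1 : v ∉ G.V1) {k : ℕ} {t : CostP d} :
    t ∈ Tset G le k v ↔
      ∀ v', G.E v v' → ∃ z ∈ upSet le (G.Iset le k v'), t = z + wc G v v' := by
  simp only [Tset, if_neg h1, Set.mem_iInter, Set.mem_setOf_eq]
  constructor
  · intro h v' hE
    obtain ⟨z, hz, rfl⟩ := h v' hE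
    exact ⟨z, hz, rfl⟩
  · intro h v' hE
    obtain ⟨z, hz, rfl⟩ := h v' hE
    exact ⟨z, hz, rfl⟩

variable {G le}

lemma minimalSet_subset (X : Set (CostP d)) : minimalSet le X ⊆ X := fun _ hx => hx.1

lemma upSet_mono {X Y : Set (CostP d)} (h : X ⊆ Y) : upSet le X ⊆ upSet le Y := by
  rintro z ⟨x, hx, hxz⟩
  exact ⟨x, h hx, hxz⟩

lemma mem_upSet_of_mem (hn : NiceLe le) {X : Set (CostP d)} {x : CostP d} (hx : x ∈ X) :
    x ∈ upSet le X := ⟨x, hx, hn.refl x⟩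

lemma upSet_upward (hn : NiceLe le) {X : Set (CostP d)} {a b : CostP d} (hab : le a b)
    (ha : a ∈ upSet le X) : b ∈ upSet le X := by
  obtain ⟨x, hx, hxa⟩ := ha
  exact ⟨x, hx, hn.trans hxa hab⟩

lemma upSet_minimalSet (hn : NiceLe le) (X : Set (CostP d)) :
    upSet le (minimalSet le X) = upSet le X := by
  apply Set.Subset.antisymm (upSet_mono (minimalSet_subset X))
  rintro z ⟨x, hx, hxz⟩
  obtain ⟨m, hm, hmx⟩ := hn.exists_min X x hx
  exact ⟨m, hm, hn.trans hmx hxz⟩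

lemma top_mem_upSet_of_nonempty (hn : NiceLe le) {X : Set (CostP d)} (h : X.Nonempty) :
    ⊤ ∈ upSet le X := by
  obtain ⟨x, hx⟩ := h
  exact ⟨x, hx, hn.of_le le_top⟩

lemma top_add_wc (v v' : V) : (⊤ : CostP d) + wc G v v' = ⊤ := by
  funext i
  show (⊤ : ℕ∞) + _ = ⊤
  exact top_add _

lemma top_mem_Tset (hn : NiceLe le) {k : ℕ} {v : V} (hne : ∀ v', (G.Iset le k v').Nonempty) :
    ⊤ ∈ Tset G le k v := by
  by_cases h1 : v ∈ G.V1
  · rw [mem_Tset_V1 G le h1]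
    obtain ⟨v', hE⟩ := G.succ_nonempty v
    exact ⟨v', hE, ⊤, top_mem_upSet_of_nonempty hn (hne v'), (top_add_wc v v').symm⟩
  · rw [mem_Tset_V2 G le h1]
    intro v' hE
    exact ⟨⊤, top_mem_upSet_of_nonempty hn (hne v'), (top_add_wc v v').symm⟩

lemma Iset_nonempty (hn : NiceLe le) : ∀ (k : ℕ) (v : V), (G.Iset le k v).Nonempty := by
  intro k
  induction k with
  | zero =>
    intro v
    by_cases hv : v ∈ G.F <;> simp [MWGame.Iset, hv]
  | succ k ih =>
    intro v
    by_cases hv : v ∈ G.F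
    · simp [MWGame.Iset, hv]
    · rw [Iset_succ G le hv k]
      obtain ⟨m, hm, -⟩ := hn.exists_min _ _ (top_mem_Tset hn ih)
      exact ⟨m, hm⟩

lemma top_mem_U (hn : NiceLe le) (k : ℕ) (v : V) : ⊤ ∈ upSet le (G.Iset le k v) :=
  top_mem_upSet_of_nonempty hn (Iset_nonempty hn k v)

lemma Iset_F {v : V} (hv : v ∈ G.F) (k : ℕ) : G.Iset le k v = {0} := by
  cases k <;> simp [MWGame.Iset, hv]

lemma U_F (hn : NiceLe le) {v : V} (hv : v ∈ G.F) (k : ℕ) : upSet le (G.Iset le k v) = Set.univ := by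
  rw [Iset_F hv k]
  apply Set.eq_univ_of_forall
  intro y
  exact ⟨0, rfl, hn.of_le (fun i => zero_le)⟩

lemma eq_top_of_le_top (hn : NiceLe le) {y : CostP d} (h : le ⊤ y) : y = ⊤ :=
  hn.antisymm (hn.of_le le_top) h

lemma mem_U_zero (hn : NiceLe le) {v : V} (hv : v ∉ G.F) {y : CostP d} :
    y ∈ upSet le (G.Iset le 0 v) ↔ y = ⊤ := by
  constructor
  · rintro ⟨x, hx, hxy⟩
    simp [MWGame.Iset, hv] at hx
    subst hx
    exact eq_top_of_le_top hn hxy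
  · rintro rfl
    exact top_mem_U hn 0 v

lemma addW_mono {X Y : Set (CostP d)} (h : X ⊆ Y) (c : Fin d → ℕ) :
    addW X c ⊆ addW Y c := by
  rintro z ⟨x, hx, rfl⟩
  exact ⟨x, h hx, rfl⟩

lemma Tset_mono_of {k k' : ℕ} {v : V}
    (h : ∀ v', upSet le (G.Iset le k v') ⊆ upSet le (G.Iset le k' v')) :
    Tset G le k v ⊆ Tset G le k' v := by
  unfold Tset
  split
  · exact Set.iUnion₂_mono fun v' _ => addW_mono (h v') _
  · exact Set.iInter₂_mono fun v' _ => addW_mono (h v') _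

lemma U_mono (hn : NiceLe le) : ∀ (k : ℕ) (v : V),
    upSet le (G.Iset le k v) ⊆ upSet le (G.Iset le (k + 1) v) := by
  intro k
  induction k with
  | zero =>
    intro v
    by_cases hv : v ∈ G.F
    · rw [U_F hn hv, U_F hn hv]
    · intro y hy
      rw [mem_U_zero hn hv] at hy
      subst hy
      exact top_mem_U hn 1 v
  | succ k ih =>
    intro v
    by_cases hv : v ∈ G.F
    · rw [U_F hn hv, U_F hn hv]
    · rw [Iset_succ G le hv k, Iset_succ G le hv (k + 1),
        upSet_minimalSet hn, upSet_minimalSet hn]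
      exact upSet_mono (Tset_mono_of ih)

lemma U_mono_le (hn : NiceLe le) {k k' : ℕ} (h : k ≤ k') (v : V) :
    upSet le (G.Iset le k v) ⊆ upSet le (G.Iset le k' v) := by
  induction k' with
  | zero => rw [Nat.le_zero.mp h]
  | succ k' ih =>
    rcases Nat.lt_or_ge k (k' + 1) with h' | h'
    · exact (ih (Nat.lt_succ_iff.mp h')).trans (U_mono hn k' v)
    · rw [Nat.le_antisymm h h']

lemma Tset_mono_le (hn : NiceLe le) {k k' : ℕ} (h : k ≤ k') (v : V) :
    Tset G le k v ⊆ Tset G le k' v :=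
  Tset_mono_of fun v' => U_mono_le hn h v'

lemma mem_U_succ (hn : NiceLe le) {v : V} (hv : v ∉ G.F) {k : ℕ} {y : CostP d} :
    y ∈ upSet le (G.Iset le (k + 1) v) ↔ ∃ t, le t y ∧ t ∈ Tset G le k v := by
  rw [Iset_succ G le hv k, upSet_minimalSet hn]
  constructor
  · rintro ⟨t, ht, hty⟩
    exact ⟨t, hty, ht⟩
  · rintro ⟨t, hty, ht⟩
    exact ⟨t, ht, hty⟩

end Game

end Stmt14Aux

namespace Stmt14Aux

open MWGame

/-- Strategy trees for Player 1. -/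
inductive GTree (V : Type*) : Type _ where
  | done : GTree V
  | one : V → GTree V → GTree V
  | all : (V → GTree V) → GTree V

/-- Size of a strategy tree. -/
noncomputable def gsize {V : Type*} [Fintype V] : GTree V → ℕ
  | .done => 1
  | .one _ s => gsize s + 1
  | .all f => (∑ v' : V, gsize (f v')) + 1

section Trees

variable {V : Type*} {d : ℕ} {G : MWGame V d} {le : CostP d → CostP d → Prop}

/-- `ok s v t`: the tree `s` witnesses that from `v` Player 1 can ensure reaching
the target with cost profile bounded by `t`. -/
def ok (G : MWGame V d) (le : CostP d → CostP d → Prop) : GTree V → V → CostP d → Prop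
  | .done, v, _ => v ∈ G.F
  | .one v' s, v, t => v ∉ G.F ∧ v ∈ G.V1 ∧ G.E v v' ∧
      ∃ z, ok G le s v' z ∧ le (z + wc G v v') t
  | .all f, v, t => v ∉ G.F ∧ v ∉ G.V1 ∧
      ∃ t', le t' t ∧ ∀ v'', G.E v v'' → ∃ z, ok G le (f v'') v'' z ∧ t' = z + wc G v v''

lemma ok_mono (hn : NiceLe le) {s : GTree V} {v : V} {t t' : CostP d}
    (h : le t t') (hok : ok G le s v t) : ok G le s v t' := by
  cases s with
  | done => exact hok
  | one v' s =>
    obtain ⟨h1, h2, h3, z, hz, hle⟩ := hok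
    exact ⟨h1, h2, h3, z, hz, hn.trans hle h⟩
  | all f =>
    obtain ⟨h1, h2, t0, ht0, hall⟩ := hok
    exact ⟨h1, h2, t0, hn.trans ht0 h, hall⟩

variable [Fintype V]

lemma gsize_pos (s : GTree V) : 1 ≤ gsize s := by
  cases s <;> simp [gsize]

lemma gsize_lt_one (v' : V) (s : GTree V) : gsize s < gsize (GTree.one v' s) := by
  simp [gsize]

lemma gsize_lt_all (f : V → GTree V) (v' : V) : gsize (f v') < gsize (GTree.all f) := by
  have h : gsize (f v') ≤ ∑ u : V, gsize (f u) :=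
    Finset.single_le_sum (f := fun u => gsize (f u)) (fun _ _ => Nat.zero_le _)
      (Finset.mem_univ v')
  calc gsize (f v') ≤ ∑ u : V, gsize (f u) := h
    _ < (∑ u : V, gsize (f u)) + 1 := Nat.lt_succ_self _
    _ = gsize (GTree.all f) := rfl

/-- From membership in the `k`-th upward-closed iterate, either the profile is `⊤`
or there is a witness tree. -/
lemma tree_of_mem (hn : NiceLe le) :
    ∀ (k : ℕ) (v : V) (t : CostP d), t ∈ upSet le (G.Iset le k v) →
      t = ⊤ ∨ ∃ s, ok G le s v t := by
  intro k
  induction k with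
  | zero =>
    intro v t ht
    by_cases hv : v ∈ G.F
    · exact Or.inr ⟨GTree.done, hv⟩
    · exact Or.inl ((mem_U_zero hn hv).mp ht)
  | succ k ih =>
    intro v t ht
    by_cases hv : v ∈ G.F
    · exact Or.inr ⟨GTree.done, hv⟩
    rw [mem_U_succ hn hv] at ht
    obtain ⟨t0, ht0t, ht0⟩ := ht
    by_cases h1 : v ∈ G.V1
    · rw [mem_Tset_V1 G le h1] at ht0
      obtain ⟨v', hE, z, hzU, rfl⟩ := ht0
      rcases ih v' z hzU with rfl | ⟨s, hs⟩
      · left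
        rw [top_add_wc v v'] at ht0t
        exact eq_top_of_le_top hn ht0t
      · exact Or.inr ⟨GTree.one v' s, hv, h1, hE, z, hs, ht0t⟩
    · rw [mem_Tset_V2 G le h1] at ht0
      by_cases htop : t0 = ⊤
      · left
        subst htop
        exact eq_top_of_le_top hn ht0t
      · right
        have hch : ∀ v'', ∃ s, G.E v v'' → ∃ z, ok G le s v'' z ∧ t0 = z + wc G v v'' := by
          intro v''
          by_cases hE : G.E v v''
          · obtain ⟨z, hzU, hzeq⟩ := ht0 v'' hE
            rcases ih v'' z hzU with rfl | ⟨s, hs⟩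
            · exact absurd (by rw [hzeq, top_add_wc]) htop
            · exact ⟨s, fun _ => ⟨z, hs, hzeq⟩⟩
          · exact ⟨GTree.done, fun hE' => absurd hE' hE⟩
        choose f hf using hch
        exact ⟨GTree.all f, hv, h1, t0, ht0t, hf⟩

/-- The key pruning lemma: any witness tree can be turned into a membership proof
at level `|V| - |L|`, where `L` records the (distinct) vertices on the current
branch together with their budgets and the sizes of their subtrees. -/
lemma prune (hn : NiceLe le) :
    ∀ (n : ℕ) (s : GTree V) (v : V) (t : CostP d) (L : List (V × CostP d × ℕ)),
      gsize s ≤ n → ok G le s v t →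
      v ∉ L.map (·.1) → (L.map (·.1)).Nodup →
      (∀ p ∈ L, le t p.2.1) → (∀ p ∈ L, gsize s < p.2.2) →
      t ∈ upSet le (G.Iset le (Fintype.card V - L.length) v) ∨
        ∃ p ∈ L, ∃ s' : GTree V, ok G le s' p.1 p.2.1 ∧ gsize s' < p.2.2 := by
  intro n
  induction n with
  | zero =>
    intro s v t L hsz
    exact absurd hsz (by have := gsize_pos s; omega)
  | succ n ih =>
    intro s v t L hsz hok hvL hnd hLle hLsz
    have hlenbound : (v :: L.map (·.1)).Nodup → L.length + 1 ≤ Fintype.card V := by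
      intro h
      have := h.length_le_card
      simpa using this
    cases s with
    | done =>
      left
      have hv : v ∈ G.F := hok
      rw [U_F hn hv]
      exact Set.mem_univ t
    | one v' s' =>
      obtain ⟨hvF, hv1, hE, z, hz, hzt⟩ := hok
      have hzle : le z t := hn.trans (hn.of_le le_self_add) hzt
      have hs'n : gsize s' ≤ n := by
        have := gsize_lt_one v' s'
        omega
      by_cases hv'v : v' = v
      · subst hv'v
        exact ih s' v' t L hs'n (ok_mono hn hzle hz) hvL hnd hLle
          (fun p hp => lt_of_lt_of_le (by have := gsize_lt_one v' s'; omega)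
            (le_of_lt (hLsz p hp)))
      by_cases hv'L : v' ∈ L.map (·.1)
      · right
        obtain ⟨p, hp, hpv⟩ := List.mem_map.mp hv'L
        have hb : le z p.2.1 := hn.trans hzle (hLle p hp)
        refine ⟨p, hp, s', ?_, lt_trans (gsize_lt_one v' s') (hLsz p hp)⟩
        rw [hpv]
        exact ok_mono hn hb hz
      · have hcall := ih s' v' z ((v, t, gsize (GTree.one v' s')) :: L) hs'n hz
          (by
            simp only [List.map_cons, List.mem_cons]
            push_neg
            exact ⟨hv'v, hv'L⟩)
          (by
            simp only [List.map_cons]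
            exact List.nodup_cons.mpr ⟨hvL, hnd⟩)
          (by
            intro p hp
            rcases List.mem_cons.mp hp with rfl | hpL
            · exact hzle
            · exact hn.trans hzle (hLle p hpL))
          (by
            intro p hp
            rcases List.mem_cons.mp hp with rfl | hpL
            · exact gsize_lt_one v' s'
            · exact lt_trans (gsize_lt_one v' s') (hLsz p hpL))
        rcases hcall with hleft | ⟨p, hp, s'', hs'', hsz''⟩
        · left
          have hlen : L.length + 1 ≤ Fintype.card V :=
            hlenbound (List.nodup_cons.mpr ⟨hvL, hnd⟩)
          have hms : Fintype.card V - L.length = (Fintype.card V - (L.length + 1)) + 1 := by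
            omega
          rw [hms, mem_U_succ hn hvF]
          refine ⟨z + wc G v v', hzt, ?_⟩
          rw [mem_Tset_V1 G le hv1]
          refine ⟨v', hE, z, ?_, rfl⟩
          simpa using hleft
        · rcases List.mem_cons.mp hp with heq | hpL
          · rw [heq] at hs'' hsz''
            have hsz''2 : gsize s'' ≤ n := by
              simp only at hsz''
              omega
            exact ih s'' v t L hsz''2 hs'' hvL hnd hLle
              (fun q hq => lt_trans hsz'' (hLsz q hq))
          · exact Or.inr ⟨p, hpL, s'', hs'', hsz''⟩
    | all f =>
      obtain ⟨hvF, hv1, t', ht't, hall⟩ := hok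
      by_cases hEvv : G.E v v
      · obtain ⟨z, hz, hzeq⟩ := hall v hEvv
        have hzwt : le (z + wc G v v) t := by rw [← hzeq]; exact ht't
        have hzt : le z t := hn.trans (hn.of_le le_self_add) hzwt
        exact ih (f v) v t L (by have := gsize_lt_all f v; omega) (ok_mono hn hzt hz)
          hvL hnd hLle
          (fun p hp => lt_trans (gsize_lt_all f v) (hLsz p hp))
      · choose zf hzf hteq using hall
        by_cases hesc : ∀ (v'' : V) (h : G.E v v''),
            zf v'' h ∈ upSet le (G.Iset le (Fintype.card V - (L.length + 1)) v'')
        · left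
          have hlen : L.length + 1 ≤ Fintype.card V :=
            hlenbound (List.nodup_cons.mpr ⟨hvL, hnd⟩)
          have hms : Fintype.card V - L.length = (Fintype.card V - (L.length + 1)) + 1 := by
            omega
          rw [hms, mem_U_succ hn hvF]
          refine ⟨t', ht't, ?_⟩
          rw [mem_Tset_V2 G le hv1]
          intro v'' hE
          exact ⟨zf v'' hE, hesc v'' hE, hteq v'' hE⟩
        · push_neg at hesc
          obtain ⟨v₀, hE₀, hz₀⟩ := hesc
          have hv₀v : v₀ ≠ v := fun h => hEvv (h ▸ hE₀)
          have hz₀t : le (zf v₀ hE₀) t := by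
            have h1 : le (zf v₀ hE₀ + wc G v v₀) t := by
              rw [← hteq v₀ hE₀]; exact ht't
            exact hn.trans (hn.of_le le_self_add) h1
          by_cases hv₀L : v₀ ∈ L.map (·.1)
          · right
            obtain ⟨p, hp, hpv⟩ := List.mem_map.mp hv₀L
            have hb : le (zf v₀ hE₀) p.2.1 := hn.trans hz₀t (hLle p hp)
            refine ⟨p, hp, f v₀, ?_, lt_trans (gsize_lt_all f v₀) (hLsz p hp)⟩
            rw [hpv]
            exact ok_mono hn hb (hzf v₀ hE₀)
          · have hcall := ih (f v₀) v₀ (zf v₀ hE₀)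
              ((v, t, gsize (GTree.all f)) :: L)
              (by have := gsize_lt_all f v₀; omega) (hzf v₀ hE₀)
              (by
                simp only [List.map_cons, List.mem_cons]
                push_neg
                exact ⟨hv₀v, hv₀L⟩)
              (by
                simp only [List.map_cons]
                exact List.nodup_cons.mpr ⟨hvL, hnd⟩)
              (by
                intro p hp
                rcases List.mem_cons.mp hp with rfl | hpL
                · exact hz₀t
                · exact hn.trans hz₀t (hLle p hpL))
              (by
                intro p hp
                rcases List.mem_cons.mp hp with rfl | hpL
                · exact gsize_lt_all f v₀
                · exact lt_trans (gsize_lt_all f v₀) (hLsz p hpL))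
            rcases hcall with hleft | ⟨p, hp, s'', hs'', hsz''⟩
            · exact absurd (by simpa using hleft) hz₀
            · rcases List.mem_cons.mp hp with heq | hpL
              · rw [heq] at hs'' hsz''
                have hsz''2 : gsize s'' ≤ n := by
                  simp only at hsz''
                  omega
                exact ih s'' v t L hsz''2 hs'' hvL hnd hLle
                  (fun q hq => lt_trans hsz'' (hLsz q hq))
              · exact Or.inr ⟨p, hpL, s'', hs'', hsz''⟩

/-- Stabilization: every level's upward closure is contained in that of level `|V|`. -/
lemma stab (hn : NiceLe le) (k : ℕ) (v : V) (t : CostP d)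
    (ht : t ∈ upSet le (G.Iset le k v)) :
    t ∈ upSet le (G.Iset le (Fintype.card V) v) := by
  rcases tree_of_mem hn k v t ht with rfl | ⟨s, hs⟩
  · exact top_mem_U hn _ v
  · have := prune hn (gsize s) s v t [] le_rfl hs (by simp) (by simp)
      (by simp) (by simp)
    rcases this with h | ⟨p, hp, -⟩
    · simpa using h
    · simp at hp

end Trees

end Stmt14Aux

/-- Monotonicity at the fixpoint: for `v ∉ F` and a finite
`x ∈ I^{|V|}(v)`, if `x ∈ Iⁿ(v)` then `x ∈ I^l(v)` for every `l ≥ n`. -/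
theorem stmt14 {V : Type*} [Fintype V] {d : ℕ} (hd : 1 ≤ d) (G : MWGame V d)
    (le : CostP d → CostP d → Prop) (hle : le = leC ∨ le = leL)
    (v : V) (hvF : v ∉ G.F) (x : CostP d)
    (hx : x ∈ G.Iset le (Fintype.card V) v) (hxne : x ≠ ⊤)
    (n : ℕ) (hn : x ∈ G.Iset le n v) :
    ∀ l, n ≤ l → x ∈ G.Iset le l v := by
  classical
  have hN : 1 ≤ Fintype.card V := @Fintype.card_pos V _ ⟨v⟩
  have hnice := Stmt14Aux.nice_of le hle
  obtain ⟨N'', hN''⟩ : ∃ N'', Fintype.card V = N'' + 1 := ⟨Fintype.card V - 1, by omega⟩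
  have hx' : x ∈ minimalSet le (Stmt14Aux.Tset G le N'' v) := by
    rw [hN'', Stmt14Aux.Iset_succ G le hvF] at hx
    exact hx
  cases n with
  | zero =>
    exfalso
    apply hxne
    have h0 : G.Iset le 0 v = {⊤} := by simp [MWGame.Iset, hvF]
    rw [h0] at hn
    exact hn
  | succ n' =>
    rw [Stmt14Aux.Iset_succ G le hvF] at hn
    intro l hl
    obtain ⟨l', rfl⟩ : ∃ l', l = l' + 1 := ⟨l - 1, by omega⟩
    rw [Stmt14Aux.Iset_succ G le hvF]
    refine ⟨Stmt14Aux.Tset_mono_le hnice (by omega) v hn.1, ?_⟩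
    intro y hyT hyx
    have hyU : y ∈ upSet le (G.Iset le (l' + 1) v) := by
      rw [Stmt14Aux.Iset_succ G le hvF, Stmt14Aux.upSet_minimalSet hnice]
      exact ⟨y, hyT, hnice.refl y⟩
    have hyN := Stmt14Aux.stab hnice _ v y hyU
    obtain ⟨zm, hzm, hzy⟩ := hyN
    rw [hN'', Stmt14Aux.Iset_succ G le hvF] at hzm
    have hzx : zm = x := hx'.2 zm hzm.1 (hnice.trans hzy hyx)
    have hxy : le x y := hzx ▸ hzy
    exact hnice.antisymm hyx hxy
end
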